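/- arXiv:1206.5120 — 2 statements merged into one kernel-verified Lean document; each statement's English description precedes it below -/
import Mathlib

section
/- Let G be a cycle graph and H a simple demand digraph on its vertices. The pair (G, H) has the uniqueness property (for every partition of a nonatomic population and every assignment of strictly increasing continuous cost functions, all Nash equilibria induce the same arc flows) if and only if each arc of the directed version of G is contained in at most two routes. -/
open scoped Classical
open MeasureTheory

/-- The positive (counterclockwise) route of the OD-pair `(o, d)` on the cycle with
vertex set `ZMod n` contains the positive arc at edge `v` (the arc from `v` to `v + 1`)
iff `posRoute n o d v` holds. -/
def posRoute (n : ℕ) (o d v : ZMod n) : Prop := (v - o).val < (d - o).val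

/-- The negative (clockwise) route of `(o, d)` contains the negative arc at edge `v`
(the arc from `v + 1` to `v`) iff `negRoute n o d v` holds. -/
def negRoute (n : ℕ) (o d v : ZMod n) : Prop := (v - d).val < (o - d).val

/-- An arc of the directed version of the cycle is a pair `(v, b)`: for `b = true` the
positive arc `v → v + 1`, for `b = false` the negative arc `v + 1 → v`.
`inRoute n o d b a` says that arc `a` lies on the route of direction `b` of the
OD-pair `(o, d)`. -/
def inRoute (n : ℕ) (o d : ZMod n) (b : Bool) (a : ZMod n × Bool) : Prop :=
  a.2 = b ∧ (if b then posRoute n o d a.1 else negRoute n o d a.1)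

/-- Flow induced on arc `a` by the strategy profile `σ` (`σ i = true` means that
user `i` chooses their positive route, `σ i = false` their negative route). -/
noncomputable def flow {I : Type} [MeasurableSpace I] (μ : Measure I) (n : ℕ)
    (od : I → ZMod n × ZMod n) (σ : I → Bool) (a : ZMod n × Bool) : ℝ :=
  (μ {i | inRoute n (od i).1 (od i).2 (σ i) a}).toReal

/-- The cost, for user `i`, of their route in direction `b`, given arc flows `f`:
the sum over the arcs of that route of the user-specific arc costs. -/
noncomputable def routeCost {I : Type} (n : ℕ) [NeZero n]
    (c : I → ZMod n × Bool → ℝ → ℝ) (f : ZMod n × Bool → ℝ)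
    (od : I → ZMod n × ZMod n) (i : I) (b : Bool) : ℝ :=
  ∑ a ∈ Finset.univ.filter (fun a : ZMod n × Bool => inRoute n (od i).1 (od i).2 b a),
    c i a (f a)

/-- `σ` is a Nash equilibrium: every user's chosen route is a minimal-cost route
given the induced flows. -/
def IsEquilibrium {I : Type} [MeasurableSpace I] (μ : Measure I) (n : ℕ) [NeZero n]
    (od : I → ZMod n × ZMod n) (c : I → ZMod n × Bool → ℝ → ℝ) (σ : I → Bool) : Prop :=
  ∀ (i : I) (b : Bool),
    routeCost n c (flow μ n od σ) od i (σ i) ≤ routeCost n c (flow μ n od σ) od i b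

/-- The pair `(G, H)` (cycle on `ZMod n`, demand digraph with arc set `L`) has the
uniqueness property: for every nonatomic population partitioned according to its
OD-pairs and every assignment of strictly increasing continuous nonnegative
user-specific cost functions, all Nash equilibria induce the same arc flows. -/
def UniquenessProperty (n : ℕ) [NeZero n] (L : Finset (ZMod n × ZMod n)) : Prop :=
  ∀ (I : Type) (m : MeasurableSpace I) (μ : @Measure I m),
    @IsFiniteMeasure I m μ →
    ∀ od : I → ZMod n × ZMod n, (∀ i, od i ∈ L) →
    ∀ c : I → ZMod n × Bool → ℝ → ℝ,
      (∀ i a, StrictMono (c i a)) → (∀ i a, Continuous (c i a)) →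
      (∀ i a x, 0 ≤ c i a x) →
    ∀ σ σ' : I → Bool,
      (∀ a, @MeasurableSet I m {i | inRoute n (od i).1 (od i).2 (σ i) a}) →
      (∀ a, @MeasurableSet I m {i | inRoute n (od i).1 (od i).2 (σ' i) a}) →
      @IsEquilibrium I m μ n _ od c σ → @IsEquilibrium I m μ n _ od c σ' →
      ∀ a : ZMod n × Bool, @flow I m μ n od σ a = @flow I m μ n od σ' a


set_option linter.unusedSectionVars false


open Finset

namespace MPCore

variable {ι V : Type*} [DecidableEq ι]

/-- side sum -/
def eS (S : Finset ι) (Q : ι → V → Bool) (t : ι → ℝ) (v : V) (b : Bool) : ℝ :=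
  ∑ ℓ ∈ S.filter (fun ℓ' => Q ℓ' v = b), t ℓ

lemma abs_sum_le_of_card_le_one {t : ι → ℝ} {F : Finset ι} {M : ℝ} (hM : 0 ≤ M)
    (hc : F.card ≤ 1) (hb : ∀ y ∈ F, |t y| ≤ M) : |∑ y ∈ F, t y| ≤ M := by
  calc |∑ y ∈ F, t y| ≤ ∑ y ∈ F, |t y| := Finset.abs_sum_le_sum_abs _ _
    _ ≤ F.card • M := Finset.sum_le_card_nsmul _ _ _ hb
    _ ≤ 1 • M := by
        apply nsmul_le_nsmul_left hM hc
    _ = M := one_smul _ _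

lemma sum_bounds {t : ι → ℝ} {F : Finset ι} {M : ℝ} {x : ι} (hM : 0 ≤ M)
    (hc : F.card ≤ 2) (hx : x ∈ F) (hb : ∀ y ∈ F, |t y| ≤ M) :
    t x - M ≤ ∑ y ∈ F, t y ∧ ∑ y ∈ F, t y ≤ t x + M := by
  have h1 : t x + ∑ y ∈ F.erase x, t y = ∑ y ∈ F, t y := Finset.add_sum_erase _ _ hx
  have hce : (F.erase x).card ≤ 1 := by
    have := Finset.card_erase_of_mem hx; omega
  have h2 : |∑ y ∈ F.erase x, t y| ≤ M :=
    abs_sum_le_of_card_le_one hM hce (fun y hy => hb y (Finset.mem_of_mem_erase hy))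
  rw [abs_le] at h2
  constructor <;> linarith

lemma partner_exists {t : ι → ℝ} {F : Finset ι} {M : ℝ} {x : ι}
    (hc : F.card ≤ 2) (hx : x ∈ F) (htx : t x = M) (hM : M ≠ 0)
    (hsum : ∑ y ∈ F, t y = 0) : ∃ p ∈ F, p ≠ x ∧ t p = -M := by
  have h1 : t x + ∑ y ∈ F.erase x, t y = ∑ y ∈ F, t y := Finset.add_sum_erase _ _ hx
  have h2 : ∑ y ∈ F.erase x, t y = -M := by rw [hsum] at h1; linarith [h1, htx.symm ▸ (rfl : t x = t x)]
  have hne : (F.erase x).Nonempty := by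
    rcases Finset.eq_empty_or_nonempty (F.erase x) with h | h
    · rw [h, Finset.sum_empty] at h2
      exact absurd h2.symm (neg_ne_zero.mpr hM)
    · exact h
  obtain ⟨p, hp⟩ := hne
  have hce : (F.erase x).card ≤ 1 := by
    have := Finset.card_erase_of_mem hx; omega
  have hsing : F.erase x = {p} := by
    apply Finset.eq_singleton_iff_unique_mem.mpr
    refine ⟨hp, fun y hy => ?_⟩
    by_contra hyp
    have : ({y, p} : Finset ι).card ≤ (F.erase x).card :=
      Finset.card_le_card (by intro z hz; simp at hz; rcases hz with rfl | rfl <;> assumption)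
    rw [Finset.card_insert_of_notMem (by simpa using hyp), Finset.card_singleton] at this
    omega
  rw [hsing, Finset.sum_singleton] at h2
  exact ⟨p, Finset.mem_of_mem_erase hp, (Finset.mem_erase.mp hp).1, h2⟩

end MPCore

namespace MPCore

variable {ι V : Type*} [DecidableEq ι]

lemma core_aux (L S : Finset ι) (hsub : S ⊆ L) (Q : ι → V → Bool) (t : ι → ℝ)
    (cov : ∀ (v : V) (b : Bool), (L.filter fun ℓ => Q ℓ v = b).card ≤ 2)
    (hne : ∀ ℓ ∈ S, ∀ b : Bool, ∃ v, Q ℓ v = b)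
    (ht0 : ∀ ℓ ∈ S, t ℓ ≠ 0)
    (ℓs : ι) (hℓs : ℓs ∈ S) (hpos : 0 < t ℓs) (hmax : ∀ ℓ ∈ S, |t ℓ| ≤ t ℓs) :
    (∀ v b, eS S Q t v b = 0) ∨
    (∃ ℓ ∈ S, 0 < t ℓ ∧ (∀ v, 0 ≤ eS S Q t v (Q ℓ v)) ∧ (∃ v, 0 < eS S Q t v (Q ℓ v))) ∨
    (∃ ℓ ∈ S, t ℓ < 0 ∧ (∀ v, eS S Q t v (Q ℓ v) ≤ 0) ∧ (∃ v, eS S Q t v (Q ℓ v) < 0)) := by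
  classical
  by_cases hW2 : ∃ ℓ ∈ S, 0 < t ℓ ∧ (∀ v, 0 ≤ eS S Q t v (Q ℓ v)) ∧ (∃ v, 0 < eS S Q t v (Q ℓ v))
  · exact Or.inr (Or.inl hW2)
  by_cases hW3 : ∃ ℓ ∈ S, t ℓ < 0 ∧ (∀ v, eS S Q t v (Q ℓ v) ≤ 0) ∧ (∃ v, eS S Q t v (Q ℓ v) < 0)
  · exact Or.inr (Or.inr hW3)
  left
  push_neg at hW2 hW3
  set M := t ℓs with hMdef
  have hMnn : (0:ℝ) ≤ M := le_of_lt hpos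
  have hMne : M ≠ 0 := ne_of_gt hpos
  have hside_card : ∀ (v : V) (ℓ : ι), (S.filter fun ℓ' => Q ℓ' v = Q ℓ v).card ≤ 2 := fun v ℓ =>
    le_trans (Finset.card_le_card (Finset.filter_subset_filter _ hsub)) (cov v (Q ℓ v))
  have hmem_side : ∀ (v : V) (ℓ : ι), ℓ ∈ S → ℓ ∈ (S.filter fun ℓ' => Q ℓ' v = Q ℓ v) :=
    fun v ℓ hℓ => Finset.mem_filter.mpr ⟨hℓ, rfl⟩
  have heS_eq : ∀ (v : V) (ℓ : ι),
      eS S Q t v (Q ℓ v) = ∑ y ∈ (S.filter fun ℓ' => Q ℓ' v = Q ℓ v), t y := fun _ _ => rfl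
  have hbnd : ∀ (v : V) (ℓ : ι), ∀ y ∈ (S.filter fun ℓ' => Q ℓ' v = Q ℓ v), |t y| ≤ M :=
    fun v ℓ y hy => hmax y (Finset.mem_filter.mp hy).1
  -- Step P : max-positive elements have all side sums 0
  have stepP : ∀ ℓ ∈ S, t ℓ = M → ∀ v, eS S Q t v (Q ℓ v) = 0 := by
    intro ℓ hℓ htl
    have hge : ∀ v, 0 ≤ eS S Q t v (Q ℓ v) := by
      intro v
      have h := (sum_bounds hMnn (hside_card v ℓ) (hmem_side v ℓ hℓ) (hbnd v ℓ)).1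
      rw [heS_eq]; rw [htl] at h; linarith
    have hle := hW2 ℓ hℓ (by rw [htl]; exact hpos) hge
    exact fun v => le_antisymm (hle v) (hge v)
  have stepN : ∀ ℓ ∈ S, t ℓ = -M → ∀ v, eS S Q t v (Q ℓ v) = 0 := by
    intro ℓ hℓ htl
    have hle : ∀ v, eS S Q t v (Q ℓ v) ≤ 0 := by
      intro v
      have h := (sum_bounds hMnn (hside_card v ℓ) (hmem_side v ℓ hℓ) (hbnd v ℓ)).2
      rw [heS_eq]; rw [htl] at h; linarith
    have hge := hW3 ℓ hℓ (by rw [htl]; linarith) hle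
    exact fun v => le_antisymm (hle v) (hge v)
  have stepE : ∀ ℓ ∈ S, (t ℓ = M ∨ t ℓ = -M) → ∀ v,
      ∑ y ∈ (S.filter fun ℓ' => Q ℓ' v = Q ℓ v), t y = 0 := by
    intro ℓ hℓ hb v
    rw [← heS_eq]
    rcases hb with h | h
    · exact stepP ℓ hℓ h v
    · exact stepN ℓ hℓ h v
  have partner : ∀ ℓ ∈ S, (t ℓ = M ∨ t ℓ = -M) → ∀ v : V,
      ∃ p ∈ (S.filter fun ℓ' => Q ℓ' v = Q ℓ v), p ≠ ℓ ∧ t p = -(t ℓ) := by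
    intro ℓ hℓ hb v
    exact partner_exists (hside_card v ℓ) (hmem_side v ℓ hℓ) rfl (ht0 ℓ hℓ) (stepE ℓ hℓ hb v)
  -- Step 4 : sides of "small" elements contain no "big" elements
  have step4 : ∀ a ∈ S, t a ≠ M → t a ≠ -M → ∀ (v : V) (m : ι),
      m ∈ (S.filter fun ℓ' => Q ℓ' v = Q a v) → t m ≠ M ∧ t m ≠ -M := by
    intro a haS h1 h2 v m hm
    have hmS : m ∈ S := (Finset.mem_filter.mp hm).1
    have hQ : Q m v = Q a v := (Finset.mem_filter.mp hm).2
    constructor <;> intro htm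
    all_goals
      obtain ⟨p, hp, hpm, htp⟩ := partner m hmS (by tauto) v
      have hpa : p ∈ (S.filter fun ℓ' => Q ℓ' v = Q a v) := by
        have hfe : (S.filter fun ℓ' => Q ℓ' v = Q m v) = S.filter fun ℓ' => Q ℓ' v = Q a v := by
          rw [hQ]
        exact hfe ▸ hp
      have ham : a ≠ m := by rintro rfl; tauto
      have hap : a ≠ p := by
        rintro rfl
        rw [htm] at htp
        first
        | exact h2 htp
        | exact h1 (by rw [htp, neg_neg])
      have hmp : m ≠ p := fun h => hpm h.symm
      have hma : m ≠ a := fun h => ham h.symm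
      have hpa' : p ≠ a := fun h => hap h.symm
      have hsub3 : ({m, p, a} : Finset ι) ⊆ S.filter fun ℓ' => Q ℓ' v = Q a v := by
        intro z hz
        simp only [Finset.mem_insert, Finset.mem_singleton] at hz
        rcases hz with rfl | rfl | rfl
        · exact hm
        · exact hpa
        · exact hmem_side v z haS
      have hc3 : ({m, p, a} : Finset ι).card = 3 := by
        rw [Finset.card_insert_of_notMem (by simp [hmp, hma]),
            Finset.card_insert_of_notMem (by simp [hpa']), Finset.card_singleton]
      have hcc := Finset.card_le_card hsub3
      rw [hc3] at hcc
      have := hside_card v a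
      omega
  set Sm := S.filter (fun ℓ => t ℓ ≠ M ∧ t ℓ ≠ -M) with hSmdef
  have smSide : ∀ a ∈ Sm, ∀ v : V, (S.filter fun ℓ' => Q ℓ' v = Q a v) ⊆ Sm := by
    intro a ha v x hx
    have haS := (Finset.mem_filter.mp ha).1
    have ha1 := (Finset.mem_filter.mp ha).2.1
    have ha2 := (Finset.mem_filter.mp ha).2.2
    have hx4 := step4 a haS ha1 ha2 v x hx
    exact Finset.mem_filter.mpr ⟨(Finset.mem_filter.mp hx).1, hx4⟩
  have smCard : Sm.card ≤ 2 := by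
    obtain ⟨v0, _⟩ := hne ℓs hℓs true
    obtain ⟨p0, hp0, hp0ne, hp0t⟩ := partner ℓs hℓs (Or.inl rfl) v0
    have hp0S : p0 ∈ S := (Finset.mem_filter.mp hp0).1
    have hS4 : S.card ≤ 4 := by
      have hsubU : S ⊆ (S.filter fun ℓ => Q ℓ v0 = true) ∪ (S.filter fun ℓ => Q ℓ v0 = false) := by
        intro x hx
        rcases Bool.eq_false_or_eq_true (Q x v0) with h | h
        · exact Finset.mem_union_left _ (Finset.mem_filter.mpr ⟨hx, h⟩)
        · exact Finset.mem_union_right _ (Finset.mem_filter.mpr ⟨hx, h⟩)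
      have h1 : (S.filter fun ℓ => Q ℓ v0 = true).card ≤ 2 :=
        le_trans (Finset.card_le_card (Finset.filter_subset_filter _ hsub)) (cov v0 true)
      have h2 : (S.filter fun ℓ => Q ℓ v0 = false).card ≤ 2 :=
        le_trans (Finset.card_le_card (Finset.filter_subset_filter _ hsub)) (cov v0 false)
      calc S.card ≤ _ := Finset.card_le_card hsubU
        _ ≤ _ := Finset.card_union_le _ _
        _ ≤ 4 := by omega
    have hdisj : Disjoint Sm ({ℓs, p0} : Finset ι) := by
      rw [Finset.disjoint_right]
      intro x hx hxSm
      have := (Finset.mem_filter.mp hxSm).2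
      simp only [Finset.mem_insert, Finset.mem_singleton] at hx
      rcases hx with rfl | rfl
      · exact this.1 rfl
      · exact this.2 hp0t
    have hsubS : Sm ∪ ({ℓs, p0} : Finset ι) ⊆ S := by
      intro x hx
      rcases Finset.mem_union.mp hx with h | h
      · exact (Finset.mem_filter.mp h).1
      · simp only [Finset.mem_insert, Finset.mem_singleton] at h
        rcases h with rfl | rfl
        · exact hℓs
        · exact hp0S
    have hc2 : ({ℓs, p0} : Finset ι).card = 2 := by
      rw [Finset.card_insert_of_notMem (by simp [Ne.symm hp0ne]), Finset.card_singleton]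
    have := Finset.card_le_card hsubS
    rw [Finset.card_union_of_disjoint hdisj, hc2] at this
    omega
  have smSame : ∀ a ∈ Sm, ∀ b ∈ Sm, ∀ u : V, Q a u = Q b u := by
    by_contra hcon
    push_neg at hcon
    obtain ⟨a, ha, b, hb, u1, hQne⟩ := hcon
    have haS : a ∈ S := (Finset.mem_filter.mp ha).1
    have hbS : b ∈ S := (Finset.mem_filter.mp hb).1
    have hab : a ≠ b := by rintro rfl; exact hQne rfl
    have hSm2 : ({a, b} : Finset ι) = Sm := by
      apply Finset.eq_of_subset_of_card_le
      · intro z hz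
        simp only [Finset.mem_insert, Finset.mem_singleton] at hz
        rcases hz with rfl | rfl
        · exact ha
        · exact hb
      · rw [Finset.card_insert_of_notMem (by simp [hab]), Finset.card_singleton]
        exact smCard
    have sideA : (S.filter fun ℓ' => Q ℓ' u1 = Q a u1) = {a} := by
      apply Finset.eq_singleton_iff_unique_mem.mpr
      refine ⟨hmem_side u1 a haS, fun x hx => ?_⟩
      have hxSm : x ∈ Sm := smSide a ha u1 hx
      rw [← hSm2] at hxSm
      simp only [Finset.mem_insert, Finset.mem_singleton] at hxSm
      rcases hxSm with rfl | rfl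
      · rfl
      · exact absurd ((Finset.mem_filter.mp hx).2).symm hQne
    have sideB : (S.filter fun ℓ' => Q ℓ' u1 = Q b u1) = {b} := by
      apply Finset.eq_singleton_iff_unique_mem.mpr
      refine ⟨hmem_side u1 b hbS, fun x hx => ?_⟩
      have hxSm : x ∈ Sm := smSide b hb u1 hx
      rw [← hSm2] at hxSm
      simp only [Finset.mem_insert, Finset.mem_singleton] at hxSm
      rcases hxSm with rfl | rfl
      · exact absurd (Finset.mem_filter.mp hx).2 hQne
      · rfl
    have heA : eS S Q t u1 (Q a u1) = t a := by
      rw [heS_eq, sideA, Finset.sum_singleton]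
    have heB : eS S Q t u1 (Q b u1) = t b := by
      rw [heS_eq, sideB, Finset.sum_singleton]
    rcases (ht0 a haS).lt_or_gt with hta | hta
    · -- t a < 0
      by_cases hA : ∀ u, eS S Q t u (Q a u) ≤ 0
      · have hz := hW3 a haS hta hA
        have := le_antisymm (hA u1) (hz u1)
        rw [heA] at this
        exact (ht0 a haS) this
      · push_neg at hA
        obtain ⟨u2, hu2⟩ := hA
        have hsubAB : (S.filter fun ℓ' => Q ℓ' u2 = Q a u2) ⊆ ({a, b} : Finset ι) := by
          rw [hSm2]; exact smSide a ha u2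
        by_cases hbm : b ∈ (S.filter fun ℓ' => Q ℓ' u2 = Q a u2)
        · have hfeq : (S.filter fun ℓ' => Q ℓ' u2 = Q a u2) = {a, b} := by
            apply Finset.Subset.antisymm hsubAB
            intro z hz
            simp only [Finset.mem_insert, Finset.mem_singleton] at hz
            rcases hz with rfl | rfl
            · exact hmem_side u2 z haS
            · exact hbm
          have hsum : 0 < t a + t b := by
            have he2 : eS S Q t u2 (Q a u2) = t a + t b := by
              rw [heS_eq, hfeq, Finset.sum_pair hab]
            linarith [hu2, he2 ▸ hu2]
          have htb : 0 < t b := by linarith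
          by_cases hB : ∀ u, 0 ≤ eS S Q t u (Q b u)
          · have hz := hW2 b hbS htb hB
            have := le_antisymm (hz u1) (hB u1)
            rw [heB] at this
            exact (ht0 b hbS) this
          · push_neg at hB
            obtain ⟨u3, hu3⟩ := hB
            have hsubB : (S.filter fun ℓ' => Q ℓ' u3 = Q b u3) ⊆ ({a, b} : Finset ι) := by
              rw [hSm2]; exact smSide b hb u3
            by_cases ham : a ∈ (S.filter fun ℓ' => Q ℓ' u3 = Q b u3)
            · have hfeq : (S.filter fun ℓ' => Q ℓ' u3 = Q b u3) = {a, b} := by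
                apply Finset.Subset.antisymm hsubB
                intro z hz
                simp only [Finset.mem_insert, Finset.mem_singleton] at hz
                rcases hz with rfl | rfl
                · exact ham
                · exact hmem_side u3 z hbS
              have he3 : eS S Q t u3 (Q b u3) = t a + t b := by
                rw [heS_eq, hfeq, Finset.sum_pair hab]
              rw [he3] at hu3
              linarith
            · have hfeq : (S.filter fun ℓ' => Q ℓ' u3 = Q b u3) = {b} := by
                apply Finset.eq_singleton_iff_unique_mem.mpr
                refine ⟨hmem_side u3 b hbS, fun x hx => ?_⟩
                have := hsubB hx
                simp only [Finset.mem_insert, Finset.mem_singleton] at this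
                rcases this with rfl | rfl
                · exact absurd hx ham
                · rfl
              have he3 : eS S Q t u3 (Q b u3) = t b := by
                rw [heS_eq, hfeq, Finset.sum_singleton]
              rw [he3] at hu3
              linarith
        · have hfeq : (S.filter fun ℓ' => Q ℓ' u2 = Q a u2) = {a} := by
            apply Finset.eq_singleton_iff_unique_mem.mpr
            refine ⟨hmem_side u2 a haS, fun x hx => ?_⟩
            have := hsubAB hx
            simp only [Finset.mem_insert, Finset.mem_singleton] at this
            rcases this with rfl | rfl
            · rfl
            · exact absurd hx hbm
          have he2 : eS S Q t u2 (Q a u2) = t a := by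
            rw [heS_eq, hfeq, Finset.sum_singleton]
          rw [he2] at hu2
          linarith
    · -- 0 < t a
      by_cases hA : ∀ u, 0 ≤ eS S Q t u (Q a u)
      · have hz := hW2 a haS hta hA
        have := le_antisymm (hz u1) (hA u1)
        rw [heA] at this
        exact (ht0 a haS) this
      · push_neg at hA
        obtain ⟨u2, hu2⟩ := hA
        have hsubAB : (S.filter fun ℓ' => Q ℓ' u2 = Q a u2) ⊆ ({a, b} : Finset ι) := by
          rw [hSm2]; exact smSide a ha u2
        by_cases hbm : b ∈ (S.filter fun ℓ' => Q ℓ' u2 = Q a u2)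
        · have hfeq : (S.filter fun ℓ' => Q ℓ' u2 = Q a u2) = {a, b} := by
            apply Finset.Subset.antisymm hsubAB
            intro z hz
            simp only [Finset.mem_insert, Finset.mem_singleton] at hz
            rcases hz with rfl | rfl
            · exact hmem_side u2 z haS
            · exact hbm
          have hsum : t a + t b < 0 := by
            have he2 : eS S Q t u2 (Q a u2) = t a + t b := by
              rw [heS_eq, hfeq, Finset.sum_pair hab]
            linarith [he2 ▸ hu2]
          have htb : t b < 0 := by linarith
          by_cases hB : ∀ u, eS S Q t u (Q b u) ≤ 0
          · have hz := hW3 b hbS htb hB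
            have := le_antisymm (hB u1) (hz u1)
            rw [heB] at this
            exact (ht0 b hbS) this
          · push_neg at hB
            obtain ⟨u3, hu3⟩ := hB
            have hsubB : (S.filter fun ℓ' => Q ℓ' u3 = Q b u3) ⊆ ({a, b} : Finset ι) := by
              rw [hSm2]; exact smSide b hb u3
            by_cases ham : a ∈ (S.filter fun ℓ' => Q ℓ' u3 = Q b u3)
            · have hfeq : (S.filter fun ℓ' => Q ℓ' u3 = Q b u3) = {a, b} := by
                apply Finset.Subset.antisymm hsubB
                intro z hz
                simp only [Finset.mem_insert, Finset.mem_singleton] at hz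
                rcases hz with rfl | rfl
                · exact ham
                · exact hmem_side u3 z hbS
              have he3 : eS S Q t u3 (Q b u3) = t a + t b := by
                rw [heS_eq, hfeq, Finset.sum_pair hab]
              rw [he3] at hu3
              linarith
            · have hfeq : (S.filter fun ℓ' => Q ℓ' u3 = Q b u3) = {b} := by
                apply Finset.eq_singleton_iff_unique_mem.mpr
                refine ⟨hmem_side u3 b hbS, fun x hx => ?_⟩
                have := hsubB hx
                simp only [Finset.mem_insert, Finset.mem_singleton] at this
                rcases this with rfl | rfl
                · exact absurd hx ham
                · rfl
              have he3 : eS S Q t u3 (Q b u3) = t b := by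
                rw [heS_eq, hfeq, Finset.sum_singleton]
              rw [he3] at hu3
              linarith
        · have hfeq : (S.filter fun ℓ' => Q ℓ' u2 = Q a u2) = {a} := by
            apply Finset.eq_singleton_iff_unique_mem.mpr
            refine ⟨hmem_side u2 a haS, fun x hx => ?_⟩
            have := hsubAB hx
            simp only [Finset.mem_insert, Finset.mem_singleton] at this
            rcases this with rfl | rfl
            · rfl
            · exact absurd hx hbm
          have he2 : eS S Q t u2 (Q a u2) = t a := by
            rw [heS_eq, hfeq, Finset.sum_singleton]
          rw [he2] at hu2
          linarith
  -- main conclusion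
  intro v bb
  by_cases hF : (S.filter fun ℓ' => Q ℓ' v = bb) = ∅
  · show (∑ ℓ ∈ S.filter fun ℓ' => Q ℓ' v = bb, t ℓ) = 0
    rw [hF, Finset.sum_empty]
  obtain ⟨a, haF⟩ := Finset.nonempty_iff_ne_empty.mpr hF
  have haS : a ∈ S := (Finset.mem_filter.mp haF).1
  have hQa : Q a v = bb := (Finset.mem_filter.mp haF).2
  by_cases hbig : t a = M ∨ t a = -M
  · have h := stepE a haS hbig v
    show (∑ ℓ ∈ S.filter fun ℓ' => Q ℓ' v = bb, t ℓ) = 0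
    rw [← hQa]
    exact h
  · push_neg at hbig
    have haSm : a ∈ Sm := Finset.mem_filter.mpr ⟨haS, hbig.1, hbig.2⟩
    have hFSm : (S.filter fun ℓ' => Q ℓ' v = bb) = Sm := by
      apply Finset.Subset.antisymm
      · intro x hx
        have hx' : x ∈ (S.filter fun ℓ' => Q ℓ' v = Q a v) := by
          rw [hQa]; exact hx
        exact smSide a haSm v hx'
      · intro c hc
        have hcS : c ∈ S := (Finset.mem_filter.mp hc).1
        refine Finset.mem_filter.mpr ⟨hcS, ?_⟩
        rw [smSame c hc a haSm v, hQa]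
    have hsideSm : ∀ c ∈ Sm, ∀ u : V, (S.filter fun ℓ' => Q ℓ' u = Q c u) = Sm := by
      intro c hc u
      apply Finset.Subset.antisymm (smSide c hc u)
      intro d hd
      exact Finset.mem_filter.mpr ⟨(Finset.mem_filter.mp hd).1, smSame d hd c hc u⟩
    have heSm : ∀ c ∈ Sm, ∀ u : V, eS S Q t u (Q c u) = ∑ ℓ ∈ Sm, t ℓ := by
      intro c hc u
      rw [heS_eq, hsideSm c hc u]
    have hE0 : (∑ ℓ ∈ Sm, t ℓ) = 0 := by
      by_contra hEne
      rcases lt_or_gt_of_ne hEne with hEneg | hEpos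
      · have hex : ∃ c ∈ Sm, t c < 0 := by
          by_contra hall
          push_neg at hall
          have : 0 ≤ ∑ ℓ ∈ Sm, t ℓ := Finset.sum_nonneg hall
          linarith
        obtain ⟨c, hc, htc⟩ := hex
        have hcS : c ∈ S := (Finset.mem_filter.mp hc).1
        have hz := hW3 c hcS htc (fun u => by rw [heSm c hc u]; linarith)
        obtain ⟨u, _⟩ := hne c hcS true
        have := hz u
        rw [heSm c hc u] at this
        linarith
      · have hex : ∃ c ∈ Sm, 0 < t c := by
          by_contra hall
          push_neg at hall
          have : (∑ ℓ ∈ Sm, t ℓ) ≤ 0 := Finset.sum_nonpos hall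
          linarith
        obtain ⟨c, hc, htc⟩ := hex
        have hcS : c ∈ S := (Finset.mem_filter.mp hc).1
        have hz := hW2 c hcS htc (fun u => by rw [heSm c hc u]; linarith)
        obtain ⟨u, _⟩ := hne c hcS true
        have := hz u
        rw [heSm c hc u] at this
        linarith
    show (∑ ℓ ∈ S.filter fun ℓ' => Q ℓ' v = bb, t ℓ) = 0
    rw [hFSm]
    exact hE0

end MPCore

namespace MPCore

variable {ι V : Type*} [DecidableEq ι]

lemma eS_neg (S : Finset ι) (Q : ι → V → Bool) (t : ι → ℝ) (v : V) (b : Bool) :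
    eS S Q (fun ℓ => -(t ℓ)) v b = -(eS S Q t v b) := by
  simp [eS, Finset.sum_neg_distrib]

lemma core (L S : Finset ι) (hsub : S ⊆ L) (Q : ι → V → Bool) (t : ι → ℝ)
    (cov : ∀ (v : V) (b : Bool), (L.filter fun ℓ => Q ℓ v = b).card ≤ 2)
    (hne : ∀ ℓ ∈ S, ∀ b : Bool, ∃ v, Q ℓ v = b)
    (ht0 : ∀ ℓ ∈ S, t ℓ ≠ 0) :
    (∀ v b, eS S Q t v b = 0) ∨
    (∃ ℓ ∈ S, 0 < t ℓ ∧ (∀ v, 0 ≤ eS S Q t v (Q ℓ v)) ∧ (∃ v, 0 < eS S Q t v (Q ℓ v))) ∨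
    (∃ ℓ ∈ S, t ℓ < 0 ∧ (∀ v, eS S Q t v (Q ℓ v) ≤ 0) ∧ (∃ v, eS S Q t v (Q ℓ v) < 0)) := by
  classical
  rcases Finset.eq_empty_or_nonempty S with hS | hS
  · left
    intro v b
    simp [eS, hS]
  obtain ⟨ℓs, hℓs, hmax⟩ := Finset.exists_max_image S (fun ℓ => |t ℓ|) hS
  rcases (ht0 ℓs hℓs).lt_or_gt with hneg | hpos
  · -- apply aux to -t
    have habs : |(fun ℓ => -(t ℓ)) ℓs| = -(t ℓs) := by simp [abs_of_neg hneg]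
    have h := core_aux L S hsub Q (fun ℓ => -(t ℓ)) cov hne
      (fun ℓ hℓ => by simpa using ht0 ℓ hℓ) ℓs hℓs (by simpa using hneg)
      (fun ℓ hℓ => by simpa [abs_of_neg hneg] using hmax ℓ hℓ)
    rcases h with h | h | h
    · left
      intro v b
      have := h v b
      rw [eS_neg] at this
      linarith
    · right; right
      obtain ⟨ℓ, hℓ, h1, h2, h3⟩ := h
      refine ⟨ℓ, hℓ, by simpa using h1, fun v => ?_, ?_⟩
      · have := h2 v; rw [eS_neg] at this; linarith
      · obtain ⟨v, hv⟩ := h3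
        exact ⟨v, by rw [eS_neg] at hv; linarith⟩
    · right; left
      obtain ⟨ℓ, hℓ, h1, h2, h3⟩ := h
      refine ⟨ℓ, hℓ, by simpa using h1, fun v => ?_, ?_⟩
      · have := h2 v; rw [eS_neg] at this; linarith
      · obtain ⟨v, hv⟩ := h3
        exact ⟨v, by rw [eS_neg] at hv; linarith⟩
  · exact core_aux L S hsub Q t cov hne ht0 ℓs hℓs hpos
      (fun ℓ hℓ => by simpa [abs_of_pos hpos] using hmax ℓ hℓ)

end MPCore




namespace MPZ

variable {n : ℕ} [NeZero n]

lemma sub_cast (x y : ZMod n) :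
    x - y = (((x.val + n - y.val : ℕ)) : ZMod n) := by
  have h1 : ((x.val : ℕ) : ZMod n) = x := ZMod.natCast_zmod_val x
  have h2 : ((y.val : ℕ) : ZMod n) = y := ZMod.natCast_zmod_val y
  have hy : y.val ≤ x.val + n := by have := y.val_lt; omega
  push_cast [Nat.cast_sub hy]
  rw [h1, h2, ZMod.natCast_self]
  ring

lemma val_sub_of_le {x y : ZMod n} (h : y.val ≤ x.val) :
    (x - y).val = x.val - y.val := by
  rw [sub_cast]
  have hlt : x.val + n - y.val < n ∨ x.val + n - y.val = x.val - y.val + n := by omega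
  have hx := x.val_lt
  have : (x.val + n - y.val : ℕ) = (x.val - y.val) + n := by omega
  rw [this]
  push_cast
  rw [ZMod.natCast_self]
  simp only [add_zero]
  rw [ZMod.val_cast_of_lt (by omega)]

lemma val_sub_of_gt {x y : ZMod n} (h : x.val < y.val) :
    (x - y).val = x.val + n - y.val := by
  rw [sub_cast]
  have hy := y.val_lt
  rw [ZMod.val_cast_of_lt (by omega)]

lemma posRoute_compl {o d : ZMod n} (hod : o ≠ d) (v : ZMod n) :
    posRoute n d o v ↔ ¬ posRoute n o d v := by
  unfold posRoute
  have hDne : d - o ≠ 0 := sub_ne_zero.mpr (Ne.symm hod)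
  have hDne' : o - d ≠ 0 := sub_ne_zero.mpr hod
  have hq : 0 < (d - o).val := ZMod.val_pos.mpr hDne
  have hq' : 0 < (o - d).val := ZMod.val_pos.mpr hDne'
  have hsum : (d - o).val + (o - d).val = n := by
    rcases le_or_gt (o.val) (d.val) with h | h
    · have h1 : (d - o).val = d.val - o.val := val_sub_of_le h
      have h2 : (o - d).val = o.val + n - d.val := by
        rcases eq_or_lt_of_le h with he | hlt
        · exfalso; exact hod (by
            have : o.val = d.val := he
            exact ZMod.val_injective n this)
        · exact val_sub_of_gt hlt
      have := d.val_lt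
      omega
    · have h1 : (d - o).val = d.val + n - o.val := val_sub_of_gt h
      have h2 : (o - d).val = o.val - d.val := val_sub_of_le (le_of_lt h)
      have := o.val_lt
      omega
  -- (v-d).val < (o-d).val ↔ ¬ (v-o).val < (d-o).val
  rcases le_or_gt ((d-o).val) ((v-o).val) with h | h
  · -- v not in P(o,d): show v - d has small val
    have hvd : v - d = (v - o) - (d - o) := by ring
    have h2 : (v - d).val = (v - o).val - (d - o).val := by
      rw [hvd, val_sub_of_le h]
    have := (v - o).val_lt
    constructor
    · intro _; omega
    · intro _; omega
  · have hvd : v - d = (v - o) - (d - o) := by ring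
    have h2 : (v - d).val = (v - o).val + n - (d - o).val := by
      rw [hvd, val_sub_of_gt h]
    have := (v - o).val_lt
    constructor
    · intro hlt; omega
    · intro hn; exfalso; exact hn h
  
lemma posRoute_self {o d : ZMod n} (hod : o ≠ d) : posRoute n o d o := by
  unfold posRoute
  simp only [sub_self, ZMod.val_zero]
  exact ZMod.val_pos.mpr (sub_ne_zero.mpr (Ne.symm hod))

end MPZ

namespace MPZ

variable {n : ℕ} [NeZero n]

lemma val_sub_one {x : ZMod n} (hn : 1 < n) (hx : x ≠ 0) : (x - 1).val = x.val - 1 := by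
  have h1 : (1 : ZMod n).val = 1 := ZMod.val_one_eq_one_mod n ▸ Nat.mod_eq_of_lt hn
  have hp : 0 < x.val := ZMod.val_pos.mpr hx
  rw [val_sub_of_le (by omega), h1]

lemma pos_o_sub_one {o d : ZMod n} (hn : 1 < n) : ¬ posRoute n o d (o - 1) := by
  unfold posRoute
  have h : (o - 1 - o) = (0 : ZMod n) - 1 := by ring
  have h1 : (1 : ZMod n).val = 1 := ZMod.val_one_eq_one_mod n ▸ Nat.mod_eq_of_lt hn
  have h2 : ((0 : ZMod n) - 1).val = 0 + n - 1 := by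
    rw [val_sub_of_gt]; · rw [ZMod.val_zero, h1]
    · rw [ZMod.val_zero, h1]; omega
  rw [h, h2]
  have := (d - o).val_lt
  omega

lemma pos_d_sub_one {o d : ZMod n} (hn : 1 < n) (hod : o ≠ d) : posRoute n o d (d - 1) := by
  unfold posRoute
  have h : (d - 1 - o) = (d - o) - 1 := by ring
  have hD : d - o ≠ 0 := sub_ne_zero.mpr (Ne.symm hod)
  have hp : 0 < (d - o).val := ZMod.val_pos.mpr hD
  rw [h, val_sub_one hn hD]
  omega

lemma pos_not_d {o d : ZMod n} : ¬ posRoute n o d d := by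
  unfold posRoute; omega

lemma left_boundary {o d v : ZMod n} (hn : 1 < n)
    (hv : posRoute n o d v) (hv1 : ¬ posRoute n o d (v - 1)) : v = o := by
  unfold posRoute at hv hv1
  by_contra hvo
  have hne : v - o ≠ 0 := sub_ne_zero.mpr hvo
  have h : (v - 1 - o) = (v - o) - 1 := by ring
  rw [h, val_sub_one hn hne] at hv1
  omega

lemma right_boundary {o d v : ZMod n} (hn : 1 < n) (hod : o ≠ d)
    (hv : ¬ posRoute n o d v) (hv1 : posRoute n o d (v - 1)) : v = d := by
  by_cases hvo : v = o
  · exfalso; exact hv (by rw [hvo]; exact posRoute_self hod)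
  unfold posRoute at hv hv1
  have hne : v - o ≠ 0 := sub_ne_zero.mpr hvo
  have h : (v - 1 - o) = (v - o) - 1 := by ring
  rw [h, val_sub_one hn hne] at hv1
  have hp : 0 < (v - o).val := ZMod.val_pos.mpr hne
  have heq : (v - o).val = (d - o).val := by omega
  have h2 : v - o = d - o := ZMod.val_injective n heq
  have h3 := congrArg (· + o) h2
  simpa using h3

lemma pos_ext {o d o' d' : ZMod n} (hn : 1 < n) (hod : o ≠ d) (hod' : o' ≠ d')
    (h : ∀ v, posRoute n o d v ↔ posRoute n o' d' v) : o = o' ∧ d = d' := by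
  constructor
  · exact (left_boundary hn ((h o').mpr (posRoute_self hod'))
      (fun hc => pos_o_sub_one hn ((h (o' - 1)).mp hc))).symm
  · exact (right_boundary hn hod (fun hc => pos_not_d ((h d').mp hc))
      ((h (d' - 1)).mpr (pos_d_sub_one hn hod'))).symm

end MPZ


/-- membership of edge `v` in the `bb`-direction route of pair `ℓ`. -/
def Rmem (n : ℕ) (ℓ : ZMod n × ZMod n) (bb : Bool) (v : ZMod n) : Prop :=
  if bb then posRoute n ℓ.1 ℓ.2 v else negRoute n ℓ.1 ℓ.2 v

namespace MPZ

variable {n : ℕ} [NeZero n]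

lemma neg_eq_pos (o d v : ZMod n) : negRoute n o d v = posRoute n d o v := rfl

lemma inRoute_iff (o d : ZMod n) (b : Bool) (v : ZMod n) (bb : Bool) :
    inRoute n o d b (v, bb) ↔ (bb = b ∧ Rmem n (o, d) bb v) := by
  unfold inRoute Rmem
  cases b <;> cases bb <;> simp

lemma Rmem_compl {ℓ : ZMod n × ZMod n} (hℓ : ℓ.1 ≠ ℓ.2) (v : ZMod n) :
    Rmem n ℓ false v ↔ ¬ Rmem n ℓ true v := by
  unfold Rmem
  simp only [if_true, if_false, neg_eq_pos]
  exact posRoute_compl hℓ v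

lemma Rmem_self_true {ℓ : ZMod n × ZMod n} (hℓ : ℓ.1 ≠ ℓ.2) : Rmem n ℓ true ℓ.1 := by
  unfold Rmem; simpa using posRoute_self hℓ

lemma Rmem_self_false {ℓ : ZMod n × ZMod n} (hℓ : ℓ.1 ≠ ℓ.2) : Rmem n ℓ false ℓ.2 := by
  unfold Rmem; simp only [if_false, neg_eq_pos]
  exact posRoute_self (Ne.symm hℓ)

lemma Rmem_ext {ℓ ℓ' : ZMod n × ZMod n} (hn : 1 < n) (hℓ : ℓ.1 ≠ ℓ.2) (hℓ' : ℓ'.1 ≠ ℓ'.2)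
    (bb : Bool) (h : ∀ v, Rmem n ℓ bb v ↔ Rmem n ℓ' bb v) : ℓ = ℓ' := by
  cases bb
  · have h' : ∀ v, posRoute n ℓ.2 ℓ.1 v ↔ posRoute n ℓ'.2 ℓ'.1 v := by
      intro v
      have := h v
      unfold Rmem at this
      simpa [neg_eq_pos] using this
    obtain ⟨h1, h2⟩ := pos_ext hn (Ne.symm hℓ) (Ne.symm hℓ') h'
    exact Prod.ext h2 h1
  · have h' : ∀ v, posRoute n ℓ.1 ℓ.2 v ↔ posRoute n ℓ'.1 ℓ'.2 v := by
      intro v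
      have := h v
      unfold Rmem at this
      simpa using this
    obtain ⟨h1, h2⟩ := pos_ext hn hℓ hℓ' h'
    exact Prod.ext h1 h2

end MPZ


noncomputable def hfun (x : ℝ) : ℝ := x / (1 + |x|) + 1

lemma hfun_denom_pos (x : ℝ) : 0 < 1 + |x| := by positivity

lemma hfun_strictMono : StrictMono hfun := by
  intro x y hxy
  unfold hfun
  have hdx := hfun_denom_pos x
  have hdy := hfun_denom_pos y
  have key : x / (1 + |x|) < y / (1 + |y|) := by
    rw [div_lt_div_iff₀ hdx hdy]
    rcases le_or_gt 0 x with hx | hx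
    · have hy : 0 < y := lt_of_le_of_lt hx hxy
      rw [abs_of_nonneg hx, abs_of_pos hy]
      nlinarith
    · rcases le_or_gt y 0 with hy | hy
      · rw [abs_of_neg hx, abs_of_nonpos hy]
        nlinarith
      · rw [abs_of_neg hx, abs_of_pos hy]
        nlinarith
  linarith

lemma hfun_continuous : Continuous hfun := by
  unfold hfun
  apply Continuous.add _ continuous_const
  exact continuous_id.div (continuous_const.add continuous_abs)
    (fun x => ne_of_gt (hfun_denom_pos x))

lemma hfun_abs_lt (x : ℝ) : |x / (1 + |x|)| < 1 := by
  rw [abs_div, abs_of_pos (hfun_denom_pos x)]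
  rw [div_lt_one (hfun_denom_pos x)]
  linarith

lemma hfun_pos (x : ℝ) : 0 < hfun x := by
  have := hfun_abs_lt x
  rw [abs_lt] at this
  unfold hfun
  linarith [this.1]

lemma hfun_lt_two (x : ℝ) : hfun x < 2 := by
  have := hfun_abs_lt x
  rw [abs_lt] at this
  unfold hfun
  linarith [this.2]

lemma hfun_one_le {x : ℝ} (hx : 0 ≤ x) : 1 ≤ hfun x := by
  unfold hfun
  have : 0 ≤ x / (1 + |x|) := div_nonneg hx (le_of_lt (hfun_denom_pos x))
  linarith

lemma hfun_one_lt {x : ℝ} (hx : 0 < x) : 1 < hfun x := by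
  unfold hfun
  have : 0 < x / (1 + |x|) := div_pos hx (hfun_denom_pos x)
  linarith

lemma hfun_neg_eq {R : ℝ} (hR : 0 ≤ R) : hfun (-R) = 1 / (1 + R) := by
  unfold hfun
  rw [abs_neg, abs_of_nonneg hR]
  field_simp
  ring

lemma verif1 {A : Type*} {n : ℕ} {F G : Finset A} {u w : A → ℝ} {α : A}
    (hF : ∀ a ∈ F, u a ≤ 2) (hcard : F.card ≤ 2 * n)
    (hα : α ∈ G) (hval : 4 * n ≤ w α) (hG : ∀ a ∈ G, 0 ≤ w a) :
    ∑ a ∈ F, u a ≤ ∑ a ∈ G, w a := by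
  calc ∑ a ∈ F, u a ≤ F.card • (2:ℝ) := Finset.sum_le_card_nsmul _ _ _ hF
    _ = (F.card : ℝ) * 2 := by rw [nsmul_eq_mul]
    _ ≤ (2*n : ℝ) * 2 := by
        have : (F.card : ℝ) ≤ (2*n : ℕ) := by exact_mod_cast hcard
        push_cast at this
        nlinarith
    _ = 4 * n := by ring
    _ ≤ w α := hval
    _ ≤ ∑ a ∈ G, w a := Finset.single_le_sum hG hα

lemma verif2 {A : Type*} [DecidableEq A] {n : ℕ} {F G : Finset A} {u w : A → ℝ} {α : A}
    (hn : 1 ≤ n)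
    (hαF : α ∈ F) (huα : u α ≤ 1/4) (hrest : ∀ a ∈ F, a ≠ α → u a ≤ 1 / (8 * n))
    (hcard : F.card ≤ 2 * n) (hex : ∃ a0 ∈ G, 1 ≤ w a0) (hG : ∀ a ∈ G, 0 ≤ w a) :
    ∑ a ∈ F, u a ≤ ∑ a ∈ G, w a := by
  obtain ⟨a0, ha0, hw1⟩ := hex
  have hn0 : (0:ℝ) < n := by exact_mod_cast (by omega : 0 < n)
  have h1 : ∑ a ∈ F.erase α, u a ≤ (F.erase α).card • (1/(8*n) : ℝ) :=
    Finset.sum_le_card_nsmul _ _ _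
      (fun a ha => hrest a (Finset.mem_of_mem_erase ha) (Finset.ne_of_mem_erase ha))
  have hce : ((F.erase α).card : ℝ) ≤ 2*n := by
    have h := Finset.card_erase_le (a := α) (s := F)
    have : (F.erase α).card ≤ 2*n := le_trans h hcard
    exact_mod_cast this
  have h2 : ((F.erase α).card : ℝ) * (1/(8*n)) ≤ 1/4 := by
    have hpos : (0:ℝ) ≤ 1/(8*n) := by positivity
    calc ((F.erase α).card : ℝ) * (1/(8*n)) ≤ (2*n) * (1/(8*n)) :=
          mul_le_mul_of_nonneg_right hce hpos
      _ = 1/4 := by field_simp; ring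
  have h3 : ∑ a ∈ F, u a = u α + ∑ a ∈ F.erase α, u a := (Finset.add_sum_erase _ _ hαF).symm
  have h4 : (1:ℝ) ≤ ∑ a ∈ G, w a := le_trans hw1 (Finset.single_le_sum hG ha0)
  rw [nsmul_eq_mul] at h1
  linarith

/-- the cost functions used in the counterexample -/
noncomputable def costC (n : ℕ) (αs : Fin 3 → ZMod n × Bool) (θ : Fin 3 → ℝ)
    (j : Fin 3) (a : ZMod n × Bool) (x : ℝ) : ℝ :=
  if a = αs j then (4 * n) * hfun (32 * n * (x - θ j))
  else if a.2 = !(αs j).2 then hfun x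
  else (1 / (16 * n)) * hfun x

lemma costC_strictMono {n : ℕ} (hn : 0 < n) (αs : Fin 3 → ZMod n × Bool) (θ : Fin 3 → ℝ)
    (j : Fin 3) (a : ZMod n × Bool) : StrictMono (costC n αs θ j a) := by
  intro x y hxy
  unfold costC
  have hn' : (0:ℝ) < n := by exact_mod_cast hn
  split_ifs
  · have : 32 * (n:ℝ) * (x - θ j) < 32 * n * (y - θ j) := by nlinarith
    have := hfun_strictMono this
    nlinarith
  · exact hfun_strictMono hxy
  · have := hfun_strictMono hxy
    have h16 : (0:ℝ) < 1 / (16 * n) := by positivity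
    nlinarith

lemma costC_continuous {n : ℕ} (αs : Fin 3 → ZMod n × Bool) (θ : Fin 3 → ℝ)
    (j : Fin 3) (a : ZMod n × Bool) : Continuous (costC n αs θ j a) := by
  unfold costC
  split_ifs
  · exact continuous_const.mul (hfun_continuous.comp (by continuity))
  · exact hfun_continuous
  · exact continuous_const.mul hfun_continuous

lemma costC_nonneg {n : ℕ} (αs : Fin 3 → ZMod n × Bool) (θ : Fin 3 → ℝ)
    (j : Fin 3) (a : ZMod n × Bool) (x : ℝ) : 0 ≤ costC n αs θ j a x := by
  unfold costC
  have h1 := hfun_pos (32 * n * (x - θ j))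
  have h2 := hfun_pos x
  have hn : (0:ℝ) ≤ n := Nat.cast_nonneg n
  split_ifs
  · positivity
  · linarith
  · positivity

lemma route_nonempty {n : ℕ} [NeZero n] {ℓ : ZMod n × ZMod n} (hℓ : ℓ.1 ≠ ℓ.2) (b : Bool) :
    ∃ a0, a0 ∈ Finset.univ.filter (fun a : ZMod n × Bool => inRoute n ℓ.1 ℓ.2 b a) ∧ a0.2 = b := by
  cases b
  · refine ⟨(ℓ.2, false), Finset.mem_filter.mpr ⟨Finset.mem_univ _, ?_⟩, rfl⟩
    exact (MPZ.inRoute_iff ℓ.1 ℓ.2 false ℓ.2 false).mpr ⟨rfl, MPZ.Rmem_self_false hℓ⟩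
  · refine ⟨(ℓ.1, true), Finset.mem_filter.mpr ⟨Finset.mem_univ _, ?_⟩, rfl⟩
    exact (MPZ.inRoute_iff ℓ.1 ℓ.2 true ℓ.1 true).mpr ⟨rfl, MPZ.Rmem_self_true hℓ⟩

lemma route_card_le {n : ℕ} [NeZero n] (ℓ : ZMod n × ZMod n) (b : Bool) :
    (Finset.univ.filter (fun a : ZMod n × Bool => inRoute n ℓ.1 ℓ.2 b a)).card ≤ 2 * n := by
  calc (Finset.univ.filter (fun a : ZMod n × Bool => inRoute n ℓ.1 ℓ.2 b a)).card
      ≤ (Finset.univ : Finset (ZMod n × Bool)).card := Finset.card_filter_le _ _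
    _ = 2 * n := by
        rw [Finset.card_univ, Fintype.card_prod, ZMod.card, Fintype.card_bool]
        ring

lemma key_cond (n : ℕ) [NeZero n] (hn : 3 ≤ n) (ℓ : ZMod n × ZMod n) (hℓ : ℓ.1 ≠ ℓ.2)
    (αs : Fin 3 → ZMod n × Bool) (θ : Fin 3 → ℝ) (j : Fin 3) (τj : Bool)
    (f : ZMod n × Bool → ℝ) (hfnn : ∀ a, 0 ≤ f a)
    (hαmem : Rmem n ℓ ((αs j).2) ((αs j).1))
    (hfα : f (αs j) = θ j + (if (αs j).2 = τj then -(1/2 : ℝ) else 1/2)) :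
    ∑ a ∈ Finset.univ.filter (fun a : ZMod n × Bool => inRoute n ℓ.1 ℓ.2 τj a),
        costC n αs θ j a (f a) ≤
    ∑ a ∈ Finset.univ.filter (fun a : ZMod n × Bool => inRoute n ℓ.1 ℓ.2 (!τj) a),
        costC n αs θ j a (f a) := by
  classical
  have hn0 : (0:ℝ) < n := by exact_mod_cast (by omega : 0 < n)
  have hmemiff : ∀ (b : Bool) (a : ZMod n × Bool),
      a ∈ Finset.univ.filter (fun a : ZMod n × Bool => inRoute n ℓ.1 ℓ.2 b a) ↔
      (a.2 = b ∧ Rmem n ℓ b a.1) := by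
    intro b a
    rw [Finset.mem_filter]
    have := MPZ.inRoute_iff ℓ.1 ℓ.2 b a.1 a.2
    constructor
    · rintro ⟨_, h⟩
      obtain ⟨h1, h2⟩ := this.mp h
      exact ⟨h1, by rwa [h1] at h2⟩
    · rintro ⟨h1, h2⟩
      exact ⟨Finset.mem_univ _, this.mpr ⟨h1, by rwa [← h1] at h2⟩⟩
  by_cases hdir : (αs j).2 = τj
  · -- special arc on chosen route, low flow value there
    have hfαval : f (αs j) = θ j - 1/2 := by rw [hfα, if_pos hdir]; ring
    apply verif2 (n := n) (α := αs j) (by omega)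
    · -- α ∈ chosen route
      exact (hmemiff τj (αs j)).mpr ⟨hdir, by rwa [hdir] at hαmem⟩
    · -- small value at special arc
      have : costC n αs θ j (αs j) (f (αs j)) = (4*n) * hfun (-(16*n)) := by
        unfold costC
        rw [if_pos rfl, hfαval]
        ring_nf
      rw [this, hfun_neg_eq (by positivity)]
      rw [mul_one_div, div_le_div_iff₀ (by positivity) (by norm_num)]
      nlinarith
    · -- other arcs of the chosen route are η-cheap
      intro a ha hne
      obtain ⟨ha2, _⟩ := (hmemiff τj a).mp ha
      have : costC n αs θ j a (f a) = (1/(16*n)) * hfun (f a) := by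
        unfold costC
        rw [if_neg hne, if_neg (by rw [ha2, ← hdir]; simp)]
      rw [this]
      have h2 := hfun_lt_two (f a)
      have : (1/(16*(n:ℝ))) * hfun (f a) ≤ (1/(16*n)) * 2 := by
        apply mul_le_mul_of_nonneg_left (le_of_lt h2) (by positivity)
      calc (1/(16*(n:ℝ))) * hfun (f a) ≤ (1/(16*n)) * 2 := this
        _ = 1 / (8*n) := by field_simp; ring
    · exact route_card_le ℓ τj
    · -- alternative route nonempty with cost ≥ 1
      obtain ⟨a0, ha0, ha0b⟩ := route_nonempty hℓ (!τj)
      refine ⟨a0, ha0, ?_⟩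
      have hne : a0 ≠ αs j := by
        intro h
        rw [h] at ha0b
        rw [hdir] at ha0b
        simp at ha0b
      have : costC n αs θ j a0 (f a0) = hfun (f a0) := by
        unfold costC
        rw [if_neg hne, if_pos (by rw [ha0b, hdir])]
      rw [this]
      exact hfun_one_le (hfnn a0)
    · intro a _
      exact costC_nonneg _ _ _ _ _
  · -- special arc on the alternative route, high flow value there
    have hdir' : (αs j).2 = !τj := by
      cases hb : (αs j).2 <;> cases hτ : τj <;> simp_all
    have hfαval : f (αs j) = θ j + 1/2 := by rw [hfα, if_neg hdir]
    apply verif1 (n := n)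
    · intro a ha
      obtain ⟨ha2, _⟩ := (hmemiff τj a).mp ha
      have hne : a ≠ αs j := by
        intro h
        rw [h, hdir'] at ha2
        simp at ha2
      have : costC n αs θ j a (f a) = hfun (f a) := by
        unfold costC
        rw [if_neg hne, if_pos (by rw [ha2, hdir']; simp)]
      rw [this]
      exact le_of_lt (hfun_lt_two _)
    · exact route_card_le ℓ τj
    · exact (hmemiff (!τj) (αs j)).mpr ⟨hdir', by rwa [hdir'] at hαmem⟩
    · have : costC n αs θ j (αs j) (f (αs j)) = (4*n) * hfun (16*n) := by
        unfold costC
        rw [if_pos rfl, hfαval]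
        ring_nf
      rw [this]
      have := hfun_one_le (x := 16*(n:ℝ)) (by positivity)
      nlinarith
    · intro a _
      exact costC_nonneg _ _ _ _ _

theorem MP_backward (n : ℕ) [NeZero n] (hn : 3 ≤ n) (L : Finset (ZMod n × ZMod n))
    (hL : ∀ ℓ ∈ L, ℓ.1 ≠ ℓ.2)
    (hcov : ∀ a : ZMod n × Bool, (L.filter (fun ℓ => inRoute n ℓ.1 ℓ.2 a.2 a)).card ≤ 2) :
    UniquenessProperty n L := by
  classical
  intro I m μ hfin od hod c hmono hcont hnn σ σ' mσ mσ' hEq hEq' a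
  have hn1 : 1 < n := by omega
  -- measurability of {od = ℓ ∧ τ = bb}
  have hmeasτ : ∀ (τ : I → Bool),
      (∀ a, MeasurableSet {i | inRoute n (od i).1 (od i).2 (τ i) a}) →
      ∀ ℓ ∈ L, ∀ bb : Bool, MeasurableSet {i | od i = ℓ ∧ τ i = bb} := by
    intro τ mτ ℓ hℓ bb
    have hkey : {i | od i = ℓ ∧ τ i = bb} =
        (⋂ v ∈ Finset.univ.filter (fun v : ZMod n => Rmem n ℓ bb v),
          {i | inRoute n (od i).1 (od i).2 (τ i) (v, bb)}) ∩
        (⋂ v ∈ Finset.univ.filter (fun v : ZMod n => ¬ Rmem n ℓ bb v),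
          {i | inRoute n (od i).1 (od i).2 (τ i) (v, bb)}ᶜ) := by
      ext i
      simp only [Set.mem_inter_iff, Set.mem_iInter, Set.mem_setOf_eq, Finset.mem_filter,
        Finset.mem_univ, true_and, Set.mem_compl_iff]
      have hiR : ∀ v : ZMod n, inRoute n (od i).1 (od i).2 (τ i) (v, bb) ↔
          (bb = τ i ∧ Rmem n (od i) bb v) := by
        intro v
        exact MPZ.inRoute_iff (od i).1 (od i).2 (τ i) v bb
      constructor
      · rintro ⟨hodℓ, hτ⟩
        constructor
        · intro v hv
          exact (hiR v).mpr ⟨hτ.symm, by rw [hodℓ]; exact hv⟩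
        · intro v hv hc
          exact hv (by rw [← hodℓ]; exact ((hiR v).mp hc).2)
      · rintro ⟨h1, h2⟩
        have hv0 : ∃ v0, Rmem n ℓ bb v0 := by
          cases bb
          · exact ⟨ℓ.2, MPZ.Rmem_self_false (hL ℓ hℓ)⟩
          · exact ⟨ℓ.1, MPZ.Rmem_self_true (hL ℓ hℓ)⟩
        obtain ⟨v0, hv0⟩ := hv0
        have hτ : τ i = bb := (((hiR v0).mp (h1 v0 hv0)).1).symm
        have hRiff : ∀ v, Rmem n (od i) bb v ↔ Rmem n ℓ bb v := by
          intro v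
          constructor
          · intro hR
            by_contra hc
            exact h2 v hc ((hiR v).mpr ⟨hτ.symm, hR⟩)
          · intro hR
            exact ((hiR v).mp (h1 v hR)).2
        exact ⟨MPZ.Rmem_ext hn1 (hL _ (hod i)) (hL ℓ hℓ) bb hRiff, hτ⟩
    rw [hkey]
    exact ((Finset.measurableSet_biInter _ (fun v _ => mτ (v, bb))).inter
          (Finset.measurableSet_biInter _ (fun v _ => (mτ (v, bb)).compl)))
  -- flow decomposition
  have hflow : ∀ (τ : I → Bool),
      (∀ a, MeasurableSet {i | inRoute n (od i).1 (od i).2 (τ i) a}) →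
      ∀ (v : ZMod n) (bb : Bool),
      flow μ n od τ (v, bb) =
        ∑ ℓ ∈ L.filter (fun ℓ => Rmem n ℓ bb v), (μ {i | od i = ℓ ∧ τ i = bb}).toReal := by
    intro τ mτ v bb
    have hset : {i | inRoute n (od i).1 (od i).2 (τ i) (v, bb)} =
        ⋃ ℓ ∈ L.filter (fun ℓ => Rmem n ℓ bb v), {i | od i = ℓ ∧ τ i = bb} := by
      ext i
      simp only [Set.mem_setOf_eq, Set.mem_iUnion, Finset.mem_filter]
      rw [MPZ.inRoute_iff (od i).1 (od i).2 (τ i) v bb]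
      constructor
      · rintro ⟨h1, h2⟩
        exact ⟨od i, ⟨hod i, h2⟩, rfl, h1.symm⟩
      · rintro ⟨ℓ, ⟨hℓL, hℓR⟩, hodi, hτ⟩
        exact ⟨hτ.symm, by rw [hodi]; exact hℓR⟩
    unfold flow
    rw [hset, measure_biUnion_finset ?hd ?hm]
    · rw [ENNReal.toReal_sum (fun ℓ _ => measure_ne_top μ _)]
    case hd =>
      intro ℓ1 h1 ℓ2 h2 hne12
      simp only [Function.onFun]
      rw [Set.disjoint_left]
      rintro i ⟨hi1, _⟩ ⟨hi2, _⟩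
      exact hne12 (hi1 ▸ hi2 ▸ rfl)
    case hm =>
      intro ℓ hℓ
      exact hmeasτ τ mτ ℓ (Finset.mem_filter.mp hℓ).1 bb
  -- the key real quantities
  set t : (ZMod n × ZMod n) → ℝ := fun ℓ =>
    (μ {i | od i = ℓ ∧ σ' i = true}).toReal - (μ {i | od i = ℓ ∧ σ i = true}).toReal with ht
  have hBB' : ∀ ℓ ∈ L,
      (μ {i | od i = ℓ ∧ σ i = false}).toReal - (μ {i | od i = ℓ ∧ σ' i = false}).toReal
        = t ℓ := by
    intro ℓ hℓ
    have hsplit : ∀ (τ : I → Bool),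
        (∀ a, MeasurableSet {i | inRoute n (od i).1 (od i).2 (τ i) a}) →
        (μ {i | od i = ℓ ∧ τ i = true}).toReal + (μ {i | od i = ℓ ∧ τ i = false}).toReal
          = (μ {i | od i = ℓ}).toReal := by
      intro τ mτ
      have hu : {i | od i = ℓ} =
          {i | od i = ℓ ∧ τ i = true} ∪ {i | od i = ℓ ∧ τ i = false} := by
        ext i
        simp only [Set.mem_setOf_eq, Set.mem_union]
        constructor
        · intro h
          rcases Bool.eq_false_or_eq_true (τ i) with hb | hb
          · exact Or.inl ⟨h, hb⟩
          · exact Or.inr ⟨h, hb⟩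
        · rintro (⟨h, _⟩ | ⟨h, _⟩) <;> exact h
      have hdis : Disjoint {i | od i = ℓ ∧ τ i = true} {i | od i = ℓ ∧ τ i = false} := by
        rw [Set.disjoint_left]
        rintro i ⟨_, h1⟩ ⟨_, h2⟩
        rw [h1] at h2
        exact Bool.noConfusion h2
      have hme := measure_union (μ := μ) hdis (hmeasτ τ mτ ℓ hℓ false)
      rw [← hu] at hme
      rw [hme, ENNReal.toReal_add (measure_ne_top μ _) (measure_ne_top μ _)]
    have h1 := hsplit σ mσ
    have h2 := hsplit σ' mσ'
    simp only [ht]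
    linarith
  set Q : (ZMod n × ZMod n) → ZMod n → Bool := fun ℓ v => decide (Rmem n ℓ true v) with hQ
  set S : Finset (ZMod n × ZMod n) := L.filter (fun ℓ => t ℓ ≠ 0) with hS
  have hQiff : ∀ ℓ ∈ L, ∀ (v : ZMod n) (bb : Bool), (Q ℓ v = bb) ↔ Rmem n ℓ bb v := by
    intro ℓ hℓ v bb
    cases bb
    · simp only [hQ, decide_eq_false_iff_not]
      exact (MPZ.Rmem_compl (hL ℓ hℓ) v).symm
    · simp only [hQ, decide_eq_true_eq]
  have hcov' : ∀ (v : ZMod n) (bb : Bool), (L.filter fun ℓ => Q ℓ v = bb).card ≤ 2 := by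
    intro v bb
    have h := hcov (v, bb)
    have hfe : L.filter (fun ℓ => inRoute n ℓ.1 ℓ.2 (v, bb).2 (v, bb)) =
        L.filter (fun ℓ => Q ℓ v = bb) := by
      apply Finset.filter_congr
      intro ℓ hℓ
      rw [MPZ.inRoute_iff ℓ.1 ℓ.2 (v, bb).2 v bb, hQiff ℓ hℓ v bb]
      simp
    rwa [hfe] at h
  have hne' : ∀ ℓ ∈ S, ∀ bb : Bool, ∃ v, Q ℓ v = bb := by
    intro ℓ hℓ bb
    have hℓL : ℓ ∈ L := (Finset.mem_filter.mp hℓ).1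
    cases bb
    · exact ⟨ℓ.2, (hQiff ℓ hℓL ℓ.2 false).mpr (MPZ.Rmem_self_false (hL ℓ hℓL))⟩
    · exact ⟨ℓ.1, (hQiff ℓ hℓL ℓ.1 true).mpr (MPZ.Rmem_self_true (hL ℓ hℓL))⟩
  have hsum_bridge : ∀ (v : ZMod n) (bb : Bool),
      ∑ ℓ ∈ L.filter (fun ℓ => Rmem n ℓ bb v), t ℓ = MPCore.eS S Q t v bb := by
    intro v bb
    have h1 : (L.filter (fun ℓ => Rmem n ℓ bb v)) = (L.filter (fun ℓ => Q ℓ v = bb)) :=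
      Finset.filter_congr (fun ℓ hℓ => (hQiff ℓ hℓ v bb).symm)
    have h2 : ∑ ℓ ∈ L.filter (fun ℓ => Q ℓ v = bb), t ℓ =
        ∑ ℓ ∈ (L.filter (fun ℓ => Q ℓ v = bb)).filter (fun ℓ => t ℓ ≠ 0), t ℓ :=
      (Finset.sum_filter_ne_zero _).symm
    have h3 : (L.filter (fun ℓ => Q ℓ v = bb)).filter (fun ℓ => t ℓ ≠ 0) =
        S.filter (fun ℓ' => Q ℓ' v = bb) := by
      rw [hS, Finset.filter_comm]
    rw [h1, h2, h3]
    rfl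
  have hdiff_true : ∀ v : ZMod n,
      flow μ n od σ (v, true) - flow μ n od σ' (v, true) = -(MPCore.eS S Q t v true) := by
    intro v
    rw [hflow σ mσ v true, hflow σ' mσ' v true, ← Finset.sum_sub_distrib, ← hsum_bridge v true,
      ← Finset.sum_neg_distrib]
    apply Finset.sum_congr rfl
    intro ℓ hℓ
    simp only [ht]
    ring
  have hdiff_false : ∀ v : ZMod n,
      flow μ n od σ (v, false) - flow μ n od σ' (v, false) = MPCore.eS S Q t v false := by
    intro v
    rw [hflow σ mσ v false, hflow σ' mσ' v false, ← Finset.sum_sub_distrib, ← hsum_bridge v false]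
    apply Finset.sum_congr rfl
    intro ℓ hℓ
    exact hBB' ℓ (Finset.mem_filter.mp hℓ).1
  have hcore := MPCore.core L S (Finset.filter_subset _ _) Q t hcov' hne'
    (fun ℓ hℓ => (Finset.mem_filter.mp hℓ).2)
  rcases hcore with hzero | hwit | hwit
  · obtain ⟨v, bb⟩ := a
    cases bb
    · have h := hzero v false
      have hd := hdiff_false v
      rw [h] at hd
      linarith
    · have h := hzero v true
      have hd := hdiff_true v
      rw [h] at hd
      linarith
  · -- positive witness : contradiction
    exfalso
    obtain ⟨ℓh, hℓhS, htpos, hall, v0, hv0⟩ := hwit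
    have hℓhL : ℓh ∈ L := (Finset.mem_filter.mp hℓhS).1
    have hiex : ∃ i, od i = ℓh ∧ σ i = false ∧ σ' i = true := by
      by_contra hc
      push_neg at hc
      have hsub2 : {i | od i = ℓh ∧ σ' i = true} ⊆ {i | od i = ℓh ∧ σ i = true} := by
        rintro i ⟨h1, h2⟩
        refine ⟨h1, ?_⟩
        rcases Bool.eq_false_or_eq_true (σ i) with hb | hb
        · exact hb
        · exact absurd h2 (hc i h1 hb)
      have hmono2 := ENNReal.toReal_mono (measure_ne_top μ _) (measure_mono hsub2)
      have : t ℓh ≤ 0 := by simp only [ht]; linarith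
      linarith
    obtain ⟨i, hodi, hσi, hσ'i⟩ := hiex
    have h1 := hEq i true
    rw [hσi] at h1
    have h2 := hEq' i false
    rw [hσ'i] at h2
    unfold routeCost at h1 h2
    rw [hodi] at h1 h2
    set Ft := Finset.univ.filter (fun a : ZMod n × Bool => inRoute n ℓh.1 ℓh.2 true a) with hFt
    set Ff := Finset.univ.filter (fun a : ZMod n × Bool => inRoute n ℓh.1 ℓh.2 false a) with hFf
    have hmemFt : ∀ ar ∈ Ft, ar.2 = true ∧ Q ℓh ar.1 = true := by
      intro ar har
      have := (Finset.mem_filter.mp har).2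
      have h := (MPZ.inRoute_iff ℓh.1 ℓh.2 true ar.1 ar.2).mp this
      exact ⟨h.1, (hQiff ℓh hℓhL ar.1 true).mpr (by
        have := h.2
        rw [h.1] at this
        exact this)⟩
    have hmemFf : ∀ ar ∈ Ff, ar.2 = false ∧ Q ℓh ar.1 = false := by
      intro ar har
      have := (Finset.mem_filter.mp har).2
      have h := (MPZ.inRoute_iff ℓh.1 ℓh.2 false ar.1 ar.2).mp this
      exact ⟨h.1, (hQiff ℓh hℓhL ar.1 false).mpr (by
        have := h.2
        rw [h.1] at this
        exact this)⟩
    have hsgn_f : ∀ ar ∈ Ff,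
        0 ≤ c i ar (flow μ n od σ ar) - c i ar (flow μ n od σ' ar) := by
      intro ar har
      obtain ⟨hb, hq⟩ := hmemFf ar har
      have hge : 0 ≤ MPCore.eS S Q t ar.1 false := by
        have := hall ar.1
        rwa [hq] at this
      have hd := hdiff_false ar.1
      have har2 : ar = (ar.1, false) := by rw [← hb]
      rw [har2]
      have hle : flow μ n od σ' (ar.1, false) ≤ flow μ n od σ (ar.1, false) := by linarith
      have := (hmono i (ar.1, false)).monotone hle
      linarith
    have hsgn_t : ∀ ar ∈ Ft,
        c i ar (flow μ n od σ ar) - c i ar (flow μ n od σ' ar) ≤ 0 := by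
      intro ar har
      obtain ⟨hb, hq⟩ := hmemFt ar har
      have hge : 0 ≤ MPCore.eS S Q t ar.1 true := by
        have := hall ar.1
        rwa [hq] at this
      have hd := hdiff_true ar.1
      have har2 : ar = (ar.1, true) := by rw [← hb]
      rw [har2]
      have hle : flow μ n od σ (ar.1, true) ≤ flow μ n od σ' (ar.1, true) := by linarith
      have := (hmono i (ar.1, true)).monotone hle
      linarith
    have hDle : ∑ ar ∈ Ff, (c i ar (flow μ n od σ ar) - c i ar (flow μ n od σ' ar)) ≤
        ∑ ar ∈ Ft, (c i ar (flow μ n od σ ar) - c i ar (flow μ n od σ' ar)) := by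
      rw [Finset.sum_sub_distrib, Finset.sum_sub_distrib]
      linarith
    rcases Bool.eq_false_or_eq_true (Q ℓh v0) with hq0 | hq0
    · rw [hq0] at hv0
      have ha0 : ((v0, true) : ZMod n × Bool) ∈ Ft := by
        refine Finset.mem_filter.mpr ⟨Finset.mem_univ _, ?_⟩
        exact (MPZ.inRoute_iff ℓh.1 ℓh.2 true v0 true).mpr
          ⟨rfl, (hQiff ℓh hℓhL v0 true).mp hq0⟩
      have hd := hdiff_true v0
      have hstrict : 0 < c i (v0, true) (flow μ n od σ' (v0, true)) -
          c i (v0, true) (flow μ n od σ (v0, true)) := by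
        have hlt : flow μ n od σ (v0, true) < flow μ n od σ' (v0, true) := by linarith
        have := hmono i (v0, true) hlt
        linarith
      have hneg2 : 0 < ∑ ar ∈ Ft, (c i ar (flow μ n od σ' ar) - c i ar (flow μ n od σ ar)) :=
        Finset.sum_pos' (fun ar har => by linarith [hsgn_t ar har]) ⟨(v0, true), ha0, hstrict⟩
      rw [Finset.sum_sub_distrib] at hneg2
      have hnn2 : 0 ≤ ∑ ar ∈ Ff, (c i ar (flow μ n od σ ar) - c i ar (flow μ n od σ' ar)) :=
        Finset.sum_nonneg hsgn_f
      rw [Finset.sum_sub_distrib] at hDle hnn2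
      linarith
    · -- strict in Ff
      rw [hq0] at hv0
      have ha0 : ((v0, false) : ZMod n × Bool) ∈ Ff := by
        refine Finset.mem_filter.mpr ⟨Finset.mem_univ _, ?_⟩
        exact (MPZ.inRoute_iff ℓh.1 ℓh.2 false v0 false).mpr
          ⟨rfl, (hQiff ℓh hℓhL v0 false).mp hq0⟩
      have hd := hdiff_false v0
      have hstrict : 0 < c i (v0, false) (flow μ n od σ (v0, false)) -
          c i (v0, false) (flow μ n od σ' (v0, false)) := by
        have hlt : flow μ n od σ' (v0, false) < flow μ n od σ (v0, false) := by linarith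
        have := hmono i (v0, false) hlt
        linarith
      have hpos2 : 0 < ∑ ar ∈ Ff, (c i ar (flow μ n od σ ar) - c i ar (flow μ n od σ' ar)) :=
        Finset.sum_pos' hsgn_f ⟨(v0, false), ha0, hstrict⟩
      have hneg2 : ∑ ar ∈ Ft, (c i ar (flow μ n od σ ar) - c i ar (flow μ n od σ' ar)) ≤ 0 :=
        Finset.sum_nonpos hsgn_t
      linarith
  · -- negative witness : contradiction (mirror)
    exfalso
    obtain ⟨ℓh, hℓhS, htneg, hall, v0, hv0⟩ := hwit
    have hℓhL : ℓh ∈ L := (Finset.mem_filter.mp hℓhS).1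
    have hiex : ∃ i, od i = ℓh ∧ σ i = true ∧ σ' i = false := by
      by_contra hc
      push_neg at hc
      have hsub2 : {i | od i = ℓh ∧ σ i = true} ⊆ {i | od i = ℓh ∧ σ' i = true} := by
        rintro i ⟨h1, h2⟩
        refine ⟨h1, ?_⟩
        rcases Bool.eq_false_or_eq_true (σ' i) with hb | hb
        · exact hb
        · exact absurd hb (hc i h1 h2)
      have hmono2 := ENNReal.toReal_mono (measure_ne_top μ _) (measure_mono hsub2)
      have : 0 ≤ t ℓh := by simp only [ht]; linarith
      linarith
    obtain ⟨i, hodi, hσi, hσ'i⟩ := hiex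
    have h1 := hEq i false
    rw [hσi] at h1
    have h2 := hEq' i true
    rw [hσ'i] at h2
    unfold routeCost at h1 h2
    rw [hodi] at h1 h2
    set Ft := Finset.univ.filter (fun a : ZMod n × Bool => inRoute n ℓh.1 ℓh.2 true a) with hFt
    set Ff := Finset.univ.filter (fun a : ZMod n × Bool => inRoute n ℓh.1 ℓh.2 false a) with hFf
    have hmemFt : ∀ ar ∈ Ft, ar.2 = true ∧ Q ℓh ar.1 = true := by
      intro ar har
      have := (Finset.mem_filter.mp har).2
      have h := (MPZ.inRoute_iff ℓh.1 ℓh.2 true ar.1 ar.2).mp this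
      exact ⟨h.1, (hQiff ℓh hℓhL ar.1 true).mpr (by
        have := h.2
        rw [h.1] at this
        exact this)⟩
    have hmemFf : ∀ ar ∈ Ff, ar.2 = false ∧ Q ℓh ar.1 = false := by
      intro ar har
      have := (Finset.mem_filter.mp har).2
      have h := (MPZ.inRoute_iff ℓh.1 ℓh.2 false ar.1 ar.2).mp this
      exact ⟨h.1, (hQiff ℓh hℓhL ar.1 false).mpr (by
        have := h.2
        rw [h.1] at this
        exact this)⟩
    have hsgn_t : ∀ ar ∈ Ft,
        0 ≤ c i ar (flow μ n od σ ar) - c i ar (flow μ n od σ' ar) := by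
      intro ar har
      obtain ⟨hb, hq⟩ := hmemFt ar har
      have hge : MPCore.eS S Q t ar.1 true ≤ 0 := by
        have := hall ar.1
        rwa [hq] at this
      have hd := hdiff_true ar.1
      have har2 : ar = (ar.1, true) := by rw [← hb]
      rw [har2]
      have hle : flow μ n od σ' (ar.1, true) ≤ flow μ n od σ (ar.1, true) := by linarith
      have := (hmono i (ar.1, true)).monotone hle
      linarith
    have hsgn_f : ∀ ar ∈ Ff,
        c i ar (flow μ n od σ ar) - c i ar (flow μ n od σ' ar) ≤ 0 := by
      intro ar har
      obtain ⟨hb, hq⟩ := hmemFf ar har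
      have hge : MPCore.eS S Q t ar.1 false ≤ 0 := by
        have := hall ar.1
        rwa [hq] at this
      have hd := hdiff_false ar.1
      have har2 : ar = (ar.1, false) := by rw [← hb]
      rw [har2]
      have hle : flow μ n od σ (ar.1, false) ≤ flow μ n od σ' (ar.1, false) := by linarith
      have := (hmono i (ar.1, false)).monotone hle
      linarith
    have hDle : ∑ ar ∈ Ft, (c i ar (flow μ n od σ ar) - c i ar (flow μ n od σ' ar)) ≤
        ∑ ar ∈ Ff, (c i ar (flow μ n od σ ar) - c i ar (flow μ n od σ' ar)) := by
      rw [Finset.sum_sub_distrib, Finset.sum_sub_distrib]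
      linarith
    rcases Bool.eq_false_or_eq_true (Q ℓh v0) with hq0 | hq0
    · rw [hq0] at hv0
      have ha0 : ((v0, true) : ZMod n × Bool) ∈ Ft := by
        refine Finset.mem_filter.mpr ⟨Finset.mem_univ _, ?_⟩
        exact (MPZ.inRoute_iff ℓh.1 ℓh.2 true v0 true).mpr
          ⟨rfl, (hQiff ℓh hℓhL v0 true).mp hq0⟩
      have hd := hdiff_true v0
      have hstrict : 0 < c i (v0, true) (flow μ n od σ (v0, true)) -
          c i (v0, true) (flow μ n od σ' (v0, true)) := by
        have hlt : flow μ n od σ' (v0, true) < flow μ n od σ (v0, true) := by linarith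
        have := hmono i (v0, true) hlt
        linarith
      have hpos2 : 0 < ∑ ar ∈ Ft, (c i ar (flow μ n od σ ar) - c i ar (flow μ n od σ' ar)) :=
        Finset.sum_pos' hsgn_t ⟨(v0, true), ha0, hstrict⟩
      have hneg2 : ∑ ar ∈ Ff, (c i ar (flow μ n od σ ar) - c i ar (flow μ n od σ' ar)) ≤ 0 :=
        Finset.sum_nonpos hsgn_f
      linarith


    · -- strict in Ff : flow difference negative there
      rw [hq0] at hv0
      have ha0 : ((v0, false) : ZMod n × Bool) ∈ Ff := by
        refine Finset.mem_filter.mpr ⟨Finset.mem_univ _, ?_⟩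
        exact (MPZ.inRoute_iff ℓh.1 ℓh.2 false v0 false).mpr
          ⟨rfl, (hQiff ℓh hℓhL v0 false).mp hq0⟩
      have hd := hdiff_false v0
      have hstrict : 0 < c i (v0, false) (flow μ n od σ' (v0, false)) -
          c i (v0, false) (flow μ n od σ (v0, false)) := by
        have hlt : flow μ n od σ (v0, false) < flow μ n od σ' (v0, false) := by linarith
        have := hmono i (v0, false) hlt
        linarith
      have hneg2 : 0 < ∑ ar ∈ Ff, (c i ar (flow μ n od σ' ar) - c i ar (flow μ n od σ ar)) :=
        Finset.sum_pos' (fun ar har => by linarith [hsgn_f ar har]) ⟨(v0, false), ha0, hstrict⟩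
      rw [Finset.sum_sub_distrib] at hneg2
      have hnn2 : 0 ≤ ∑ ar ∈ Ft, (c i ar (flow μ n od σ ar) - c i ar (flow μ n od σ' ar)) :=
        Finset.sum_nonneg hsgn_t
      rw [Finset.sum_sub_distrib] at hDle hnn2
      linarith
lemma Rmem_not {n : ℕ} [NeZero n] {ℓ : ZMod n × ZMod n} (hℓ : ℓ.1 ≠ ℓ.2) (b : Bool) (v : ZMod n) :
    Rmem n ℓ (!b) v ↔ ¬ Rmem n ℓ b v := by
  cases b
  · have := MPZ.Rmem_compl hℓ v
    simp only [Bool.not_false]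
    tauto
  · simpa using MPZ.Rmem_compl hℓ v

lemma iff_of_two_not {P Q R : Prop} (h1 : ¬(P ↔ Q)) (h2 : ¬(P ↔ R)) : Q ↔ R := by tauto

lemma prop3a {P Q R : Prop} (hw : ¬(P ↔ R)) (h1c : (P ↔ Q) → (P ↔ R))
    (h2c : (Q ↔ R) → (Q ↔ P)) : False := by tauto

lemma prop3b {P Q R : Prop} (hw : ¬(Q ↔ R)) (h1c : (P ↔ Q) → (P ↔ R))
    (h2c : (P ↔ R) → (P ↔ Q)) : False := by tauto

lemma fin3_cases (j : Fin 3) : j = 0 ∨ j = 1 ∨ j = 2 := by fin_cases j <;> simp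

lemma bool_ne_iff' {x y : Bool} (h : x ≠ y) : x = !y := by
  cases x <;> cases y <;> simp_all

lemma construct (n : ℕ) [NeZero n] (hn : 3 ≤ n) (L : Finset (ZMod n × ZMod n))
    (hL : ∀ ℓ ∈ L, ℓ.1 ≠ ℓ.2) (bs : Bool) (vs vA vB : ZMod n)
    (ℓL ℓA ℓB : ZMod n × ZMod n) (hLm : ℓL ∈ L) (hAm : ℓA ∈ L) (hBm : ℓB ∈ L)
    (hsL : Rmem n ℓL bs vs) (hsA : Rmem n ℓA bs vs) (hsB : Rmem n ℓB bs vs)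
    (hA1 : Rmem n ℓL bs vA ↔ Rmem n ℓA bs vA) (hA2 : ¬(Rmem n ℓL bs vA ↔ Rmem n ℓB bs vA))
    (hB1 : Rmem n ℓL bs vB ↔ Rmem n ℓB bs vB) (hB2 : ¬(Rmem n ℓL bs vB ↔ Rmem n ℓA bs vB)) :
    ¬ UniquenessProperty n L := by
  classical
  intro hU
  have hLne := hL ℓL hLm
  have hAne := hL ℓA hAm
  have hBne := hL ℓB hBm
  set βA : Bool := if Rmem n ℓA bs vA then bs else !bs with hβA
  set βB : Bool := if Rmem n ℓB bs vB then bs else !bs with hβB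
  set αs : Fin 3 → ZMod n × Bool := ![(vs, bs), (vA, βA), (vB, βB)] with hαs
  set θv : Fin 3 → ℝ := ![7/2, 5/2, 5/2] with hθ
  set od : Fin 3 → ZMod n × ZMod n := ![ℓL, ℓA, ℓB] with hod
  set σ : Fin 3 → Bool := ![bs, !bs, !bs] with hσdef
  set σ' : Fin 3 → Bool := ![!bs, bs, bs] with hσ'def
  set μ : Measure (Fin 3) :=
    (3 : ENNReal) • Measure.dirac 0 + (2 : ENNReal) • Measure.dirac 1 + (2 : ENNReal) • Measure.dirac 2
    with hμdef
  -- membership facts at vA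
  have hmemA : Rmem n ℓA βA vA := by
    by_cases hq : Rmem n ℓA bs vA
    · rw [hβA, if_pos hq]; exact hq
    · rw [hβA, if_neg hq]; exact (Rmem_not hAne bs vA).mpr hq
  have hmemLA : Rmem n ℓL βA vA := by
    by_cases hq : Rmem n ℓA bs vA
    · rw [hβA, if_pos hq]; exact hA1.mpr hq
    · rw [hβA, if_neg hq]; exact (Rmem_not hLne bs vA).mpr (fun h => hq (hA1.mp h))
  have hmemBA : ¬ Rmem n ℓB βA vA := by
    by_cases hq : Rmem n ℓA bs vA
    · rw [hβA, if_pos hq]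
      have hqL : Rmem n ℓL bs vA := hA1.mpr hq
      tauto
    · rw [hβA, if_neg hq]
      rw [Rmem_not hBne]
      have hqL : ¬ Rmem n ℓL bs vA := fun h => hq (hA1.mp h)
      tauto
  -- membership facts at vB
  have hmemB : Rmem n ℓB βB vB := by
    by_cases hq : Rmem n ℓB bs vB
    · rw [hβB, if_pos hq]; exact hq
    · rw [hβB, if_neg hq]; exact (Rmem_not hBne bs vB).mpr hq
  have hmemLB : Rmem n ℓL βB vB := by
    by_cases hq : Rmem n ℓB bs vB
    · rw [hβB, if_pos hq]; exact hB1.mpr hq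
    · rw [hβB, if_neg hq]; exact (Rmem_not hLne bs vB).mpr (fun h => hq (hB1.mp h))
  have hmemAB : ¬ Rmem n ℓA βB vB := by
    by_cases hq : Rmem n ℓB bs vB
    · rw [hβB, if_pos hq]
      have hqL : Rmem n ℓL bs vB := hB1.mpr hq
      tauto
    · rw [hβB, if_neg hq]
      rw [Rmem_not hAne]
      have hqL : ¬ Rmem n ℓL bs vB := fun h => hq (hB1.mp h)
      tauto
  -- measure evaluation
  have hμapp : ∀ S : Set (Fin 3), (μ S).toReal =
      (if (0 : Fin 3) ∈ S then (3:ℝ) else 0) + (if (1 : Fin 3) ∈ S then 2 else 0) +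
      (if (2 : Fin 3) ∈ S then 2 else 0) := by
    intro S
    rw [hμdef]
    simp only [Measure.add_apply, Measure.smul_apply, smul_eq_mul, Measure.dirac_apply,
      Set.indicator_apply, Pi.one_apply]
    by_cases h0 : (0 : Fin 3) ∈ S <;> by_cases h1 : (1 : Fin 3) ∈ S <;>
      by_cases h2 : (2 : Fin 3) ∈ S <;> simp [h0, h1, h2] <;> norm_num
  have hinR : ∀ (ℓ : ZMod n × ZMod n) (b : Bool) (v : ZMod n) (bb : Bool),
      inRoute n ℓ.1 ℓ.2 b (v, bb) ↔ (bb = b ∧ Rmem n ℓ bb v) := fun ℓ b v bb =>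
    MPZ.inRoute_iff ℓ.1 ℓ.2 b v bb
  have hflow3 : ∀ (τ : Fin 3 → Bool) (a : ZMod n × Bool),
      flow μ n od τ a =
        (if inRoute n ℓL.1 ℓL.2 (τ 0) a then (3:ℝ) else 0) +
        (if inRoute n ℓA.1 ℓA.2 (τ 1) a then 2 else 0) +
        (if inRoute n ℓB.1 ℓB.2 (τ 2) a then 2 else 0) := by
    intro τ a
    unfold flow
    rw [hμapp]
    have h0 : od 0 = ℓL := rfl
    have h1 : od 1 = ℓA := rfl
    have h2 : od 2 = ℓB := rfl
    by_cases i0 : inRoute n ℓL.1 ℓL.2 (τ 0) a <;>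
    by_cases i1 : inRoute n ℓA.1 ℓA.2 (τ 1) a <;>
    by_cases i2 : inRoute n ℓB.1 ℓB.2 (τ 2) a <;>
      simp [Set.mem_setOf_eq, h0, h1, h2, i0, i1, i2]
  -- special-arc flow values
  have hαs0 : αs 0 = (vs, bs) := rfl
  have hαs1 : αs 1 = (vA, βA) := rfl
  have hαs2 : αs 2 = (vB, βB) := rfl
  have hσ0 : σ 0 = bs := rfl
  have hσ1 : σ 1 = !bs := rfl
  have hσ2 : σ 2 = !bs := rfl
  have hσ'0 : σ' 0 = !bs := rfl
  have hσ'1 : σ' 1 = bs := rfl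
  have hσ'2 : σ' 2 = bs := rfl
  have hθ0 : θv 0 = 7/2 := rfl
  have hθ1 : θv 1 = 5/2 := rfl
  have hθ2 : θv 2 = 5/2 := rfl
  have hflowσ0 : flow μ n od σ (vs, bs) = 3 := by
    rw [hflow3]
    rw [hσ0, hσ1, hσ2]
    rw [if_pos ((hinR ℓL bs vs bs).mpr ⟨rfl, hsL⟩),
      if_neg (fun hc => by simpa using ((hinR ℓA (!bs) vs bs).mp hc).1),
      if_neg (fun hc => by simpa using ((hinR ℓB (!bs) vs bs).mp hc).1)]
    norm_num
  have hflowσ'0 : flow μ n od σ' (vs, bs) = 4 := by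
    rw [hflow3]
    rw [hσ'0, hσ'1, hσ'2]
    rw [if_neg (fun hc => by simpa using ((hinR ℓL (!bs) vs bs).mp hc).1),
      if_pos ((hinR ℓA bs vs bs).mpr ⟨rfl, hsA⟩),
      if_pos ((hinR ℓB bs vs bs).mpr ⟨rfl, hsB⟩)]
    norm_num
  have hflowσ1 : flow μ n od σ (vA, βA) = if βA = bs then 3 else 2 := by
    rw [hflow3, hσ0, hσ1, hσ2]
    by_cases hq : βA = bs
    · rw [if_pos ((hinR ℓL bs vA βA).mpr ⟨hq, hmemLA⟩),
        if_neg (fun hc => by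
          have := ((hinR ℓA (!bs) vA βA).mp hc).1
          rw [hq] at this
          simpa using this),
        if_neg (fun hc => hmemBA ((hinR ℓB (!bs) vA βA).mp hc).2), if_pos hq]
      norm_num
    · have hq' : βA = !bs := bool_ne_iff' hq
      rw [if_neg (fun hc => hq ((hinR ℓL bs vA βA).mp hc).1),
        if_pos ((hinR ℓA (!bs) vA βA).mpr ⟨hq', hmemA⟩),
        if_neg (fun hc => hmemBA ((hinR ℓB (!bs) vA βA).mp hc).2), if_neg hq]
      norm_num
  have hflowσ'1 : flow μ n od σ' (vA, βA) = if βA = bs then 2 else 3 := by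
    rw [hflow3, hσ'0, hσ'1, hσ'2]
    by_cases hq : βA = bs
    · rw [if_neg (fun hc => by
          have := ((hinR ℓL (!bs) vA βA).mp hc).1
          rw [hq] at this
          simpa using this),
        if_pos ((hinR ℓA bs vA βA).mpr ⟨hq, hmemA⟩),
        if_neg (fun hc => hmemBA ((hinR ℓB bs vA βA).mp hc).2), if_pos hq]
      norm_num
    · have hq' : βA = !bs := bool_ne_iff' hq
      rw [if_pos ((hinR ℓL (!bs) vA βA).mpr ⟨hq', hmemLA⟩),
        if_neg (fun hc => hq ((hinR ℓA bs vA βA).mp hc).1),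
        if_neg (fun hc => hmemBA ((hinR ℓB bs vA βA).mp hc).2), if_neg hq]
      norm_num
  have hflowσ2 : flow μ n od σ (vB, βB) = if βB = bs then 3 else 2 := by
    rw [hflow3, hσ0, hσ1, hσ2]
    by_cases hq : βB = bs
    · rw [if_pos ((hinR ℓL bs vB βB).mpr ⟨hq, hmemLB⟩),
        if_neg (fun hc => hmemAB ((hinR ℓA (!bs) vB βB).mp hc).2),
        if_neg (fun hc => by
          have := ((hinR ℓB (!bs) vB βB).mp hc).1
          rw [hq] at this
          simpa using this), if_pos hq]
      norm_num
    · have hq' : βB = !bs := bool_ne_iff' hq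
      rw [if_neg (fun hc => hq ((hinR ℓL bs vB βB).mp hc).1),
        if_neg (fun hc => hmemAB ((hinR ℓA (!bs) vB βB).mp hc).2),
        if_pos ((hinR ℓB (!bs) vB βB).mpr ⟨hq', hmemB⟩), if_neg hq]
      norm_num
  have hflowσ'2 : flow μ n od σ' (vB, βB) = if βB = bs then 2 else 3 := by
    rw [hflow3, hσ'0, hσ'1, hσ'2]
    by_cases hq : βB = bs
    · rw [if_neg (fun hc => by
          have := ((hinR ℓL (!bs) vB βB).mp hc).1
          rw [hq] at this
          simpa using this),
        if_neg (fun hc => hmemAB ((hinR ℓA bs vB βB).mp hc).2),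
        if_pos ((hinR ℓB bs vB βB).mpr ⟨hq, hmemB⟩), if_pos hq]
      norm_num
    · have hq' : βB = !bs := bool_ne_iff' hq
      rw [if_pos ((hinR ℓL (!bs) vB βB).mpr ⟨hq', hmemLB⟩),
        if_neg (fun hc => hmemAB ((hinR ℓA bs vB βB).mp hc).2),
        if_neg (fun hc => hq ((hinR ℓB bs vB βB).mp hc).1), if_neg hq]
      norm_num
  -- special flow values in the form needed by key_cond
  have hspecσ : ∀ j : Fin 3,
      flow μ n od σ (αs j) = θv j + (if (αs j).2 = σ j then -(1/2 : ℝ) else 1/2) := by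
    intro j
    rcases fin3_cases j with rfl | rfl | rfl
    · rw [hαs0, hflowσ0, hθ0]
      rw [if_pos (show ((vs, bs) : ZMod n × Bool).2 = σ 0 from hσ0.symm)]
      norm_num
    · rw [hαs1, hflowσ1, hθ1, hσ1]
      by_cases hq : βA = bs
      · rw [if_pos hq, if_neg (by
          show βA = !bs → False
          rw [hq]; cases bs <;> simp)]
        norm_num
      · have hq' : βA = !bs := bool_ne_iff' hq
        rw [if_neg hq, if_pos hq']
        norm_num
    · rw [hαs2, hflowσ2, hθ2, hσ2]
      by_cases hq : βB = bs
      · rw [if_pos hq, if_neg (by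
          show βB = !bs → False
          rw [hq]; cases bs <;> simp)]
        norm_num
      · have hq' : βB = !bs := bool_ne_iff' hq
        rw [if_neg hq, if_pos hq']
        norm_num
  have hspecσ' : ∀ j : Fin 3,
      flow μ n od σ' (αs j) = θv j + (if (αs j).2 = σ' j then -(1/2 : ℝ) else 1/2) := by
    intro j
    rcases fin3_cases j with rfl | rfl | rfl
    · rw [hαs0, hflowσ'0, hθ0, hσ'0]
      rw [if_neg (by
        show bs = !bs → False
        cases bs <;> simp)]
      norm_num
    · rw [hαs1, hflowσ'1, hθ1, hσ'1]
      by_cases hq : βA = bs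
      · rw [if_pos hq, if_pos hq]
        norm_num
      · rw [if_neg hq, if_neg hq]
        norm_num
    · rw [hαs2, hflowσ'2, hθ2, hσ'2]
      by_cases hq : βB = bs
      · rw [if_pos hq, if_pos hq]
        norm_num
      · rw [if_neg hq, if_neg hq]
        norm_num
  -- assemble
  have hodmem : ∀ j, od j ∈ L := by
    intro j
    rcases fin3_cases j with rfl | rfl | rfl
    · exact hLm
    · exact hAm
    · exact hBm
  have hodne : ∀ j, (od j).1 ≠ (od j).2 := fun j => hL _ (hodmem j)
  have hαmem : ∀ j : Fin 3, Rmem n (od j) ((αs j).2) ((αs j).1) := by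
    intro j
    rcases fin3_cases j with rfl | rfl | rfl
    · exact hsL
    · exact hmemA
    · exact hmemB
  have hEqσ : IsEquilibrium μ n od (costC n αs θv) σ := by
    intro i b
    by_cases hb : b = σ i
    · rw [hb]
    · have hb' : b = !(σ i) := bool_ne_iff' hb
      rw [hb']
      exact key_cond n hn (od i) (hodne i) αs θv i (σ i) (flow μ n od σ)
        (fun a => ENNReal.toReal_nonneg) (hαmem i) (hspecσ i)
  have hEqσ' : IsEquilibrium μ n od (costC n αs θv) σ' := by
    intro i b
    by_cases hb : b = σ' i
    · rw [hb]
    · have hb' : b = !(σ' i) := bool_ne_iff' hb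
      rw [hb']
      exact key_cond n hn (od i) (hodne i) αs θv i (σ' i) (flow μ n od σ')
        (fun a => ENNReal.toReal_nonneg) (hαmem i) (hspecσ' i)
  have hfin : IsFiniteMeasure μ := by
    constructor
    rw [hμdef]
    simp only [Measure.add_apply, Measure.smul_apply, smul_eq_mul, Measure.dirac_apply,
      Set.indicator_apply, Pi.one_apply, Set.mem_univ, if_true]
    norm_num
  have heq := hU (Fin 3) inferInstance μ hfin od hodmem (costC n αs θv)
    (costC_strictMono (by omega) αs θv) (costC_continuous αs θv) (costC_nonneg αs θv)
    σ σ' (fun a => MeasurableSet.of_discrete) (fun a => MeasurableSet.of_discrete)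
    hEqσ hEqσ' (vs, bs)
  rw [hflowσ0, hflowσ'0] at heq
  norm_num at heq

/-- For a cycle supply graph and a simple demand digraph, the pair
`(G, H)` has the uniqueness property iff each arc of the directed version of the cycle
is contained in at most two routes. -/
theorem uniquenessProperty_iff_atMostTwoRoutes (n : ℕ) [NeZero n] (hn : 3 ≤ n)
    (L : Finset (ZMod n × ZMod n)) (hL : ∀ ℓ ∈ L, ℓ.1 ≠ ℓ.2) :
    UniquenessProperty n L ↔
      ∀ a : ZMod n × Bool, (L.filter (fun ℓ => inRoute n ℓ.1 ℓ.2 a.2 a)).card ≤ 2 := by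
  classical
  have hn1 : 1 < n := by omega
  constructor
  · intro hU a
    by_contra hcge
    push_neg at hcge
    obtain ⟨ℓ1, ℓ2, ℓ3, h1, h2, h3, h12, h13, h23⟩ := Finset.two_lt_card_iff.mp hcge
    obtain ⟨h1L, h1R⟩ := Finset.mem_filter.mp h1
    obtain ⟨h2L, h2R⟩ := Finset.mem_filter.mp h2
    obtain ⟨h3L, h3R⟩ := Finset.mem_filter.mp h3
    set bs := a.2 with hbs
    set vs := a.1 with hvs
    have hs1 : Rmem n ℓ1 bs vs := ((MPZ.inRoute_iff ℓ1.1 ℓ1.2 bs vs bs).mp h1R).2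
    have hs2 : Rmem n ℓ2 bs vs := ((MPZ.inRoute_iff ℓ2.1 ℓ2.2 bs vs bs).mp h2R).2
    have hs3 : Rmem n ℓ3 bs vs := ((MPZ.inRoute_iff ℓ3.1 ℓ3.2 bs vs bs).mp h3R).2
    have d12 : ∃ v, ¬(Rmem n ℓ1 bs v ↔ Rmem n ℓ2 bs v) := by
      by_contra hd
      push_neg at hd
      exact h12 (MPZ.Rmem_ext hn1 (hL _ h1L) (hL _ h2L) bs hd)
    have d13 : ∃ v, ¬(Rmem n ℓ1 bs v ↔ Rmem n ℓ3 bs v) := by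
      by_contra hd
      push_neg at hd
      exact h13 (MPZ.Rmem_ext hn1 (hL _ h1L) (hL _ h3L) bs hd)
    have d23 : ∃ v, ¬(Rmem n ℓ2 bs v ↔ Rmem n ℓ3 bs v) := by
      by_contra hd
      push_neg at hd
      exact h23 (MPZ.Rmem_ext hn1 (hL _ h2L) (hL _ h3L) bs hd)
    by_cases hc3 : ∃ v, (Rmem n ℓ1 bs v ↔ Rmem n ℓ2 bs v) ∧ ¬(Rmem n ℓ1 bs v ↔ Rmem n ℓ3 bs v)
    · by_cases hc2 : ∃ v, (Rmem n ℓ1 bs v ↔ Rmem n ℓ3 bs v) ∧ ¬(Rmem n ℓ1 bs v ↔ Rmem n ℓ2 bs v)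
      · obtain ⟨vA, hA1, hA2⟩ := hc3
        obtain ⟨vB, hB1, hB2⟩ := hc2
        exact construct n hn L hL bs vs vA vB ℓ1 ℓ2 ℓ3 h1L h2L h3L hs1 hs2 hs3
          hA1 hA2 hB1 hB2 hU
      · obtain ⟨w, hw⟩ := d12
        push_neg at hc2
        have hw13 : ¬(Rmem n ℓ1 bs w ↔ Rmem n ℓ3 bs w) := fun h => hw (hc2 w h)
        obtain ⟨vA, hA1', hA2'⟩ := hc3
        exact construct n hn L hL bs vs vA w ℓ2 ℓ1 ℓ3 h2L h1L h3L hs2 hs1 hs3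
          hA1'.symm (fun h => hA2' (hA1'.trans h)) (iff_of_two_not hw hw13)
          (fun h => hw h.symm) hU
    · by_cases hc2 : ∃ v, (Rmem n ℓ1 bs v ↔ Rmem n ℓ3 bs v) ∧ ¬(Rmem n ℓ1 bs v ↔ Rmem n ℓ2 bs v)
      · by_cases hc1 : ∃ v, (Rmem n ℓ2 bs v ↔ Rmem n ℓ3 bs v) ∧ ¬(Rmem n ℓ2 bs v ↔ Rmem n ℓ1 bs v)
        · obtain ⟨vA, hA1', hA2'⟩ := hc2
          obtain ⟨vB, hB1', hB2'⟩ := hc1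
          exact construct n hn L hL bs vs vA vB ℓ3 ℓ1 ℓ2 h3L h1L h2L hs3 hs1 hs2
            hA1'.symm (fun h => hA2' (hA1'.trans h)) hB1'.symm
            (fun h => hB2' (hB1'.trans h)) hU
        · exfalso
          obtain ⟨w, hw⟩ := d13
          push_neg at hc3 hc1
          exact prop3a hw (hc3 w) (hc1 w)
      · exfalso
        obtain ⟨w, hw⟩ := d23
        push_neg at hc2 hc3
        exact prop3b hw (hc3 w) (hc2 w)
  · intro hcov
    exact MP_backward n hn L hL hcov
end

section
/- If the supply graph is a cycle and there are at most two OD-pairs (|L| ≤ 2, H simple), then the pair (G, H) has the uniqueness property. -/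
open scoped Classical
open MeasureTheory

section MyAux
section ZModAux

variable {n : ℕ} [NeZero n]

lemma RingAux.zval_pos {x : ZMod n} (h : x ≠ 0) : 0 < x.val :=
  Nat.pos_of_ne_zero (fun h0 => h ((ZMod.val_eq_zero x).mp h0))

lemma RingAux.one_nz (hn : 3 ≤ n) : (1 : ZMod n) ≠ 0 := by
  haveI : Fact (1 < n) := ⟨by omega⟩
  intro h
  have := congrArg ZMod.val h
  rw [ZMod.val_one n, ZMod.val_zero] at this
  omega

lemma RingAux.two_nz (hn : 3 ≤ n) : (2 : ZMod n) ≠ 0 := by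
  intro h
  have h2 : ((2:ℕ) : ZMod n).val = 2 := ZMod.val_cast_of_lt (by omega)
  have : ((2:ℕ) : ZMod n) = (2 : ZMod n) := by push_cast; ring
  rw [this, h, ZMod.val_zero] at h2
  omega

lemma RingAux.one_ne_two (hn : 3 ≤ n) : (1 : ZMod n) ≠ 2 := by
  intro h
  have : (2 : ZMod n) - 1 = 0 := by rw [← h]; ring
  have h1 : (2 : ZMod n) - 1 = 1 := by ring
  rw [h1] at this
  exact RingAux.one_nz hn this

lemma RingAux.pos_iff_not_neg (hn : 3 ≤ n) {o d : ZMod n} (h : o ≠ d) (v : ZMod n) :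
    posRoute n o d v ↔ ¬ negRoute n o d v := by
  have hdo : d - o ≠ 0 := sub_ne_zero.mpr (Ne.symm h)
  have hk : 0 < (d - o).val := RingAux.zval_pos hdo
  have hkn : (d - o).val < n := ZMod.val_lt _
  have han : (v - o).val < n := ZMod.val_lt _
  have hod : (o - d).val = n - (d - o).val := by
    have e : o - d = -(d - o) := by ring
    rw [e, ZMod.neg_val, if_neg hdo]
  have hvd : v - d = (v - o) + (o - d) := by ring
  set k := (d - o).val
  set a := (v - o).val
  have hval : (v - d).val = (a + (n - k)) % n := by rw [hvd, ZMod.val_add, hod]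
  unfold posRoute negRoute
  rw [hval, hod]
  rcases lt_or_ge a k with hlt | hge
  · have e : (a + (n - k)) % n = a + (n - k) := Nat.mod_eq_of_lt (by omega)
    rw [e]
    constructor
    · intro _ hneg; omega
    · intro _; exact hlt
  · have h1 : a + (n - k) = (a - k) + n := by omega
    have e : (a + (n - k)) % n = a - k := by
      rw [h1, Nat.add_mod_right, Nat.mod_eq_of_lt (by omega)]
    rw [e]
    constructor
    · intro hc; omega
    · intro hneg; exfalso; exact hneg (by omega)

lemma RingAux.posRoute_origin {o d : ZMod n} (h : o ≠ d) : posRoute n o d o := by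
  unfold posRoute
  rw [sub_self, ZMod.val_zero]
  exact RingAux.zval_pos (sub_ne_zero.mpr (Ne.symm h))

lemma RingAux.negRoute_dest {o d : ZMod n} (h : o ≠ d) : negRoute n o d d := by
  unfold negRoute
  rw [sub_self, ZMod.val_zero]
  exact RingAux.zval_pos (sub_ne_zero.mpr h)

lemma RingAux.val_sub_one (hn : 3 ≤ n) {x : ZMod n} (hx : x ≠ 0) :
    (x - 1).val = x.val - 1 := by
  haveI : Fact (1 < n) := ⟨by omega⟩
  have hvx : 0 < x.val := RingAux.zval_pos hx
  have hxn : x.val < n := ZMod.val_lt _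
  have hneg : ((-1 : ZMod n)).val = n - 1 := by
    rw [ZMod.neg_val, if_neg (RingAux.one_nz hn), ZMod.val_one n]
  have e : x - 1 = x + (-1) := by ring
  rw [e, ZMod.val_add, hneg]
  have h1 : x.val + (n - 1) = (x.val - 1) + n := by omega
  rw [h1, Nat.add_mod_right, Nat.mod_eq_of_lt (by omega)]

lemma RingAux.origin_eq (hn : 3 ≤ n) {o1 d1 o2 d2 : ZMod n} (h2 : o2 ≠ d2)
    (h : ∀ v, posRoute n o1 d1 v ↔ posRoute n o2 d2 v) : o1 = o2 := by
  haveI : Fact (1 < n) := ⟨by omega⟩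
  by_contra hne
  have ha0 : o2 - o1 ≠ 0 := sub_ne_zero.mpr (Ne.symm hne)
  have hsd : posRoute n o2 d2 o2 := RingAux.posRoute_origin h2
  have ha : (o2 - o1).val < (d1 - o1).val := (h o2).mpr hsd
  have haa : 0 < (o2 - o1).val := RingAux.zval_pos ha0
  have hw1 : posRoute n o1 d1 (o2 - 1) := by
    unfold posRoute
    have e : o2 - 1 - o1 = (o2 - o1) - 1 := by ring
    rw [e, RingAux.val_sub_one hn ha0]
    omega
  have hw2 := (h _).mp hw1
  unfold posRoute at hw2
  have e : o2 - 1 - o2 = -1 := by ring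
  rw [e, ZMod.neg_val, if_neg (RingAux.one_nz hn), ZMod.val_one n] at hw2
  have := ZMod.val_lt (d2 - o2)
  omega

lemma RingAux.routes_determine (hn : 3 ≤ n) {o1 d1 o2 d2 : ZMod n}
    (h1 : o1 ≠ d1) (h2 : o2 ≠ d2)
    (h : ∀ v, posRoute n o1 d1 v ↔ posRoute n o2 d2 v) : o1 = o2 ∧ d1 = d2 := by
  have ho := RingAux.origin_eq hn h2 h
  refine ⟨ho, ?_⟩
  subst ho
  have k1 : ¬ ((d1 - o1).val < (d2 - o1).val) := fun hc => lt_irrefl _ ((h d1).mpr hc)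
  have k2 : ¬ ((d2 - o1).val < (d1 - o1).val) := fun hc => lt_irrefl _ ((h d2).mp hc)
  have hv : (d1 - o1).val = (d2 - o1).val := by omega
  have he : d1 - o1 = d2 - o1 := ZMod.val_injective n hv
  exact sub_left_injective he

end ZModAux

lemma RingAux.sum_contra {α : Type} [Fintype α] (S T : Finset α)
    (C : α → ℝ → ℝ) (hC : ∀ a, StrictMono (C a)) (g g' : α → ℝ)
    (hS : ∀ a ∈ S, g a ≤ g' a) (hT : ∀ a ∈ T, g' a ≤ g a)
    (hstrict : (∃ a ∈ S, g a < g' a) ∨ ∃ a ∈ T, g' a < g a)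
    (E1 : ∑ a ∈ T, C a (g a) ≤ ∑ a ∈ S, C a (g a))
    (E2 : ∑ a ∈ S, C a (g' a) ≤ ∑ a ∈ T, C a (g' a)) : False := by
  have hA : ∑ a ∈ S, C a (g a) ≤ ∑ a ∈ S, C a (g' a) :=
    Finset.sum_le_sum (fun a ha => (hC a).monotone (hS a ha))
  have hB : ∑ a ∈ T, C a (g' a) ≤ ∑ a ∈ T, C a (g a) :=
    Finset.sum_le_sum (fun a ha => (hC a).monotone (hT a ha))
  rcases hstrict with ⟨a, ha, hlt⟩ | ⟨a, ha, hlt⟩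
  · have : ∑ a ∈ S, C a (g a) < ∑ a ∈ S, C a (g' a) :=
      Finset.sum_lt_sum (fun b hb => (hC b).monotone (hS b hb)) ⟨a, ha, (hC a) hlt⟩
    linarith
  · have : ∑ a ∈ T, C a (g' a) < ∑ a ∈ T, C a (g a) :=
      Finset.sum_lt_sum (fun b hb => (hC b).monotone (hT b hb)) ⟨a, ha, (hC a) hlt⟩
    linarith

lemma RingAux.meas_helper {I : Type} [MeasurableSpace I] {A B : Set I}
    (hd : A ∩ B = ∅) {n : ℕ} {P Q : ZMod n → Prop} (hP : ∃ v, P v)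
    (hne : ¬ ∀ v, (P v ↔ Q v))
    (h : ∀ v, MeasurableSet ((if P v then A else ∅) ∪ (if Q v then B else ∅))) :
    MeasurableSet A := by
  by_cases hc : ∃ v, P v ∧ ¬ Q v
  · obtain ⟨v, hPv, hQv⟩ := hc
    have := h v
    rwa [if_pos hPv, if_neg hQv, Set.union_empty] at this
  · push_neg at hc
    have hc2 : ∃ v, Q v ∧ ¬ P v := by
      push_neg at hne
      obtain ⟨v, hv⟩ := hne
      rcases hv with ⟨hPv, hQv⟩ | ⟨hPv, hQv⟩
      · exact absurd (hc v hPv) hQv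
      · exact ⟨v, hQv, hPv⟩
    obtain ⟨w, hQw, hPw⟩ := hc2
    have hB : MeasurableSet B := by
      have := h w
      rwa [if_neg hPw, if_pos hQw, Set.empty_union] at this
    obtain ⟨v, hPv⟩ := hP
    have hQv : Q v := hc v hPv
    have hU := h v
    rw [if_pos hPv, if_pos hQv] at hU
    have hA : A = (A ∪ B) \ B := by
      rw [Set.union_diff_right]
      ext x
      simp only [Set.mem_diff]
      constructor
      · intro hx
        refine ⟨hx, fun hxB => ?_⟩
        have : x ∈ A ∩ B := ⟨hx, hxB⟩
        rw [hd] at this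
        exact this
      · exact fun hx => hx.1
    rw [hA]
    exact hU.diff hB

lemma RingAux.pos_split {I : Type} {n : ℕ} [NeZero n] {o1 d1 o2 d2 : ZMod n}
    (h12 : (o1, d1) ≠ (o2, d2))
    {od : I → ZMod n × ZMod n} (hod : ∀ i, od i = (o1, d1) ∨ od i = (o2, d2))
    (τ : I → Bool) (v : ZMod n) :
    {i | inRoute n (od i).1 (od i).2 (τ i) (v, true)} =
      (if posRoute n o1 d1 v then {i | od i = (o1, d1) ∧ τ i = true} else ∅) ∪
      (if posRoute n o2 d2 v then {i | od i = (o2, d2) ∧ τ i = true} else ∅) := by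
  ext i
  rcases hod i with h | h <;> cases hτ : τ i <;>
    by_cases hp1 : posRoute n o1 d1 v <;> by_cases hp2 : posRoute n o2 d2 v <;>
    simp [inRoute, h, hτ, hp1, hp2, h12, h12.symm, Prod.ext_iff] <;> first | tauto | (simp_all [Prod.ext_iff]; try exact fun a b => h12 a.symm b.symm)

lemma RingAux.neg_split {I : Type} {n : ℕ} [NeZero n] {o1 d1 o2 d2 : ZMod n}
    (h12 : (o1, d1) ≠ (o2, d2))
    {od : I → ZMod n × ZMod n} (hod : ∀ i, od i = (o1, d1) ∨ od i = (o2, d2))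
    (τ : I → Bool) (v : ZMod n) :
    {i | inRoute n (od i).1 (od i).2 (τ i) (v, false)} =
      (if negRoute n o1 d1 v then {i | od i = (o1, d1) ∧ τ i = false} else ∅) ∪
      (if negRoute n o2 d2 v then {i | od i = (o2, d2) ∧ τ i = false} else ∅) := by
  ext i
  rcases hod i with h | h <;> cases hτ : τ i <;>
    by_cases hp1 : negRoute n o1 d1 v <;> by_cases hp2 : negRoute n o2 d2 v <;>
    simp [inRoute, h, hτ, hp1, hp2, h12, h12.symm, Prod.ext_iff] <;> first | tauto | (simp_all [Prod.ext_iff]; try exact fun a b => h12 a.symm b.symm)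

end MyAux

lemma RingAux.hiffpos {n : ℕ} [NeZero n] (hn : 3 ≤ n)
    {o1 d1 o2 d2 : ZMod n} (h1 : o1 ≠ d1) (h2 : o2 ≠ d2) (h12 : (o1, d1) ≠ (o2, d2)) :
    ¬ ∀ v, posRoute n o1 d1 v ↔ posRoute n o2 d2 v := fun hall => by
  obtain ⟨e1, e2⟩ := RingAux.routes_determine hn h1 h2 hall
  exact h12 (by rw [e1, e2])

lemma RingAux.hiffneg {n : ℕ} [NeZero n] (hn : 3 ≤ n)
    {o1 d1 o2 d2 : ZMod n} (h1 : o1 ≠ d1) (h2 : o2 ≠ d2) (h12 : (o1, d1) ≠ (o2, d2)) :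
    ¬ ∀ v, negRoute n o1 d1 v ↔ negRoute n o2 d2 v := fun hall =>
  RingAux.hiffpos hn h1 h2 h12 (fun v => by
    rw [RingAux.pos_iff_not_neg hn h1, RingAux.pos_iff_not_neg hn h2, hall v])

lemma RingAux.disjT {I : Type} {n : ℕ} [NeZero n]
    {o1 d1 o2 d2 : ZMod n} (h12 : (o1, d1) ≠ (o2, d2)) (od : I → ZMod n × ZMod n)
    (τ : I → Bool) (b1 b2 : Bool) :
    {i | od i = (o1, d1) ∧ τ i = b1} ∩ {i | od i = (o2, d2) ∧ τ i = b2} = ∅ := by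
  rw [Set.eq_empty_iff_forall_notMem]
  rintro i ⟨⟨e1, -⟩, ⟨e2, -⟩⟩
  exact h12 (e1.symm.trans e2)

lemma RingAux.measAll {I : Type} [MeasurableSpace I] {n : ℕ} [NeZero n] (hn : 3 ≤ n)
    {o1 d1 o2 d2 : ZMod n} (h1 : o1 ≠ d1) (h2 : o2 ≠ d2) (h12 : (o1, d1) ≠ (o2, d2))
    {od : I → ZMod n × ZMod n} (hod : ∀ i, od i = (o1, d1) ∨ od i = (o2, d2))
    (τ : I → Bool)
    (hmτ : ∀ a, MeasurableSet {i | inRoute n (od i).1 (od i).2 (τ i) a}) :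
    MeasurableSet {i | od i = (o1, d1) ∧ τ i = true} ∧
    MeasurableSet {i | od i = (o2, d2) ∧ τ i = true} ∧
    MeasurableSet {i | od i = (o1, d1) ∧ τ i = false} ∧
    MeasurableSet {i | od i = (o2, d2) ∧ τ i = false} := by
  refine ⟨?_, ?_, ?_, ?_⟩
  · exact RingAux.meas_helper (RingAux.disjT h12 od τ true true)
      ⟨o1, RingAux.posRoute_origin h1⟩ (RingAux.hiffpos hn h1 h2 h12)
      (fun v => by rw [← RingAux.pos_split h12 hod τ v]; exact hmτ (v, true))
  · exact RingAux.meas_helper (by rw [Set.inter_comm]; exact RingAux.disjT h12 od τ true true)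
      ⟨o2, RingAux.posRoute_origin h2⟩
      (fun hall => RingAux.hiffpos hn h1 h2 h12 (fun v => (hall v).symm))
      (fun v => by rw [Set.union_comm, ← RingAux.pos_split h12 hod τ v]; exact hmτ (v, true))
  · exact RingAux.meas_helper (RingAux.disjT h12 od τ false false)
      ⟨d1, RingAux.negRoute_dest h1⟩ (RingAux.hiffneg hn h1 h2 h12)
      (fun v => by rw [← RingAux.neg_split h12 hod τ v]; exact hmτ (v, false))
  · exact RingAux.meas_helper (by rw [Set.inter_comm]; exact RingAux.disjT h12 od τ false false)
      ⟨d2, RingAux.negRoute_dest h2⟩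
      (fun hall => RingAux.hiffneg hn h1 h2 h12 (fun v => (hall v).symm))
      (fun v => by rw [Set.union_comm, ← RingAux.neg_split h12 hod τ v]; exact hmτ (v, false))

lemma RingAux.flowPos {I : Type} {m : MeasurableSpace I} {μ : Measure I} [IsFiniteMeasure μ]
    {n : ℕ} [NeZero n]
    {o1 d1 o2 d2 : ZMod n} (h12 : (o1, d1) ≠ (o2, d2))
    {od : I → ZMod n × ZMod n} (hod : ∀ i, od i = (o1, d1) ∨ od i = (o2, d2))
    (τ : I → Bool) (hB : MeasurableSet {i | od i = (o2, d2) ∧ τ i = true}) (v : ZMod n) :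
    flow μ n od τ (v, true) =
      (if posRoute n o1 d1 v then (μ {i | od i = (o1, d1) ∧ τ i = true}).toReal else 0) +
      (if posRoute n o2 d2 v then (μ {i | od i = (o2, d2) ∧ τ i = true}).toReal else 0) := by
  unfold flow
  rw [RingAux.pos_split h12 hod τ v]
  by_cases hp1 : posRoute n o1 d1 v <;> by_cases hp2 : posRoute n o2 d2 v <;>
    simp only [hp1, hp2, if_true, if_false, Set.union_empty, Set.empty_union,
      Set.union_self, measure_empty, ENNReal.toReal_zero, add_zero, zero_add]
  rw [measure_union (Set.disjoint_iff_inter_eq_empty.mpr (RingAux.disjT h12 od τ true true)) hB,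
    ENNReal.toReal_add (measure_ne_top μ _) (measure_ne_top μ _)]

lemma RingAux.flowNeg {I : Type} {m : MeasurableSpace I} {μ : Measure I} [IsFiniteMeasure μ]
    {n : ℕ} [NeZero n]
    {o1 d1 o2 d2 : ZMod n} (h12 : (o1, d1) ≠ (o2, d2))
    {od : I → ZMod n × ZMod n} (hod : ∀ i, od i = (o1, d1) ∨ od i = (o2, d2))
    (τ : I → Bool) (hB : MeasurableSet {i | od i = (o2, d2) ∧ τ i = false}) (v : ZMod n) :
    flow μ n od τ (v, false) =
      (if negRoute n o1 d1 v then (μ {i | od i = (o1, d1) ∧ τ i = false}).toReal else 0) +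
      (if negRoute n o2 d2 v then (μ {i | od i = (o2, d2) ∧ τ i = false}).toReal else 0) := by
  unfold flow
  rw [RingAux.neg_split h12 hod τ v]
  by_cases hp1 : negRoute n o1 d1 v <;> by_cases hp2 : negRoute n o2 d2 v <;>
    simp only [hp1, hp2, if_true, if_false, Set.union_empty, Set.empty_union,
      Set.union_self, measure_empty, ENNReal.toReal_zero, add_zero, zero_add]
  rw [measure_union (Set.disjoint_iff_inter_eq_empty.mpr (RingAux.disjT h12 od τ false false)) hB,
    ENNReal.toReal_add (measure_ne_top μ _) (measure_ne_top μ _)]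

lemma RingAux.cons {I : Type} {m : MeasurableSpace I} {μ : Measure I} [IsFiniteMeasure μ]
    {n : ℕ} {od : I → ZMod n × ZMod n} (τ : I → Bool) (p : ZMod n × ZMod n)
    (hF : MeasurableSet {i | od i = p ∧ τ i = false}) :
    (μ {i | od i = p ∧ τ i = true}).toReal + (μ {i | od i = p ∧ τ i = false}).toReal =
      (μ {i | od i = p}).toReal := by
  have hdisj : Disjoint {i | od i = p ∧ τ i = true} {i | od i = p ∧ τ i = false} := by
    rw [Set.disjoint_left]
    rintro i ⟨-, e1⟩ ⟨-, e2⟩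
    rw [e1] at e2
    exact Bool.noConfusion e2
  have hU : {i | od i = p ∧ τ i = true} ∪ {i | od i = p ∧ τ i = false} = {i | od i = p} := by
    ext i
    cases hτ : τ i <;> simp [hτ]
  rw [← ENNReal.toReal_add (measure_ne_top μ _) (measure_ne_top μ _),
    ← measure_union hdisj hF, hU]

set_option maxHeartbeats 2000000 in
lemma RingAux.core {I : Type} {m : MeasurableSpace I} {μ : Measure I} [IsFiniteMeasure μ]
    {n : ℕ} [NeZero n] (hn : 3 ≤ n)
    {o1 d1 o2 d2 : ZMod n} (h1 : o1 ≠ d1) (h2 : o2 ≠ d2) (h12 : (o1, d1) ≠ (o2, d2))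
    {od : I → ZMod n × ZMod n} (hod : ∀ i, od i = (o1, d1) ∨ od i = (o2, d2))
    {c : I → ZMod n × Bool → ℝ → ℝ} (hc : ∀ i a, StrictMono (c i a))
    {σ σ' : I → Bool}
    (hm : ∀ a, MeasurableSet {i | inRoute n (od i).1 (od i).2 (σ i) a})
    (hm' : ∀ a, MeasurableSet {i | inRoute n (od i).1 (od i).2 (σ' i) a})
    (he : IsEquilibrium μ n od c σ) (he' : IsEquilibrium μ n od c σ')
    (hlt : (μ {i | od i = (o1, d1) ∧ σ i = true}).toReal <
           (μ {i | od i = (o1, d1) ∧ σ' i = true}).toReal) : False := by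
  have hiffpos := RingAux.hiffpos hn h1 h2 h12
  obtain ⟨mT1, mT2, mF1, mF2⟩ := RingAux.measAll hn h1 h2 h12 hod σ hm
  obtain ⟨mT1', mT2', mF1', mF2'⟩ := RingAux.measAll hn h1 h2 h12 hod σ' hm'
  have flowPos := fun (τ : I → Bool) hB v => RingAux.flowPos (μ := μ) h12 hod τ hB v
  have flowNeg := fun (τ : I → Bool) hB v => RingAux.flowNeg (μ := μ) h12 hod τ hB v
  have cons1 : (μ {i | od i = (o1, d1) ∧ σ i = true}).toReal +
      (μ {i | od i = (o1, d1) ∧ σ i = false}).toReal =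
      (μ {i | od i = (o1, d1) ∧ σ' i = true}).toReal +
      (μ {i | od i = (o1, d1) ∧ σ' i = false}).toReal := by
    rw [RingAux.cons (μ := μ) σ (o1, d1) mF1, RingAux.cons (μ := μ) σ' (o1, d1) mF1']
  have cons2 : (μ {i | od i = (o2, d2) ∧ σ i = true}).toReal +
      (μ {i | od i = (o2, d2) ∧ σ i = false}).toReal =
      (μ {i | od i = (o2, d2) ∧ σ' i = true}).toReal +
      (μ {i | od i = (o2, d2) ∧ σ' i = false}).toReal := by
    rw [RingAux.cons (μ := μ) σ (o2, d2) mF2, RingAux.cons (μ := μ) σ' (o2, d2) mF2']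
  -- existence of a switching user
  have exSwitch : ∀ (τ τ' : I → Bool) (p : ZMod n × ZMod n),
      (μ {i | od i = p ∧ τ i = true}).toReal < (μ {i | od i = p ∧ τ' i = true}).toReal →
      ∃ i, od i = p ∧ τ i = false ∧ τ' i = true := by
    intro τ τ' p hlt'
    by_contra hno
    push_neg at hno
    have hsub : {i | od i = p ∧ τ' i = true} ⊆ {i | od i = p ∧ τ i = true} := by
      rintro i ⟨hodi, hτ'⟩
      refine ⟨hodi, ?_⟩
      cases hb : τ i with
      | true => rfl
      | false => exact absurd hτ' (hno i hodi hb)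
    have hmono := measure_mono (μ := μ) hsub
    have := ENNReal.toReal_mono (measure_ne_top μ _) hmono
    linarith
  -- abbreviations
  set y1 := (μ {i | od i = (o1, d1) ∧ σ i = true}).toReal with hy1
  set y2 := (μ {i | od i = (o2, d2) ∧ σ i = true}).toReal with hy2
  set z1 := (μ {i | od i = (o1, d1) ∧ σ i = false}).toReal with hz1
  set z2 := (μ {i | od i = (o2, d2) ∧ σ i = false}).toReal with hz2
  set w1 := (μ {i | od i = (o1, d1) ∧ σ' i = true}).toReal with hw1
  set w2 := (μ {i | od i = (o2, d2) ∧ σ' i = true}).toReal with hw2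
  set x1 := (μ {i | od i = (o1, d1) ∧ σ' i = false}).toReal with hx1
  set x2 := (μ {i | od i = (o2, d2) ∧ σ' i = false}).toReal with hx2
  rcases le_or_gt 0 ((w1 - y1) + (w2 - y2)) with hs | hs
  · -- the "total positive shift is nonnegative" case: a group-1 switcher gives a contradiction
    obtain ⟨i, hodi, hσi, hσ'i⟩ := exSwitch σ σ' (o1, d1) hlt
    have hS : ∀ a ∈ Finset.univ.filter (fun a : ZMod n × Bool => inRoute n o1 d1 true a),
        flow μ n od σ a ≤ flow μ n od σ' a := by
      rintro ⟨v, b⟩ ha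
      obtain ⟨hb, hp⟩ := (Finset.mem_filter.mp ha).2
      simp only at hb
      subst hb
      simp at hp
      rw [flowPos σ mT2 v, flowPos σ' mT2' v]
      by_cases hp2 : posRoute n o2 d2 v <;> simp only [hp, hp2, if_true, if_false] <;> linarith
    have hT : ∀ a ∈ Finset.univ.filter (fun a : ZMod n × Bool => inRoute n o1 d1 false a),
        flow μ n od σ' a ≤ flow μ n od σ a := by
      rintro ⟨v, b⟩ ha
      obtain ⟨hb, hp⟩ := (Finset.mem_filter.mp ha).2
      simp only at hb
      subst hb
      simp at hp
      rw [flowNeg σ mF2 v, flowNeg σ' mF2' v]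
      by_cases hp2 : negRoute n o2 d2 v <;> simp only [hp, hp2, if_true, if_false] <;> linarith
    have hstrict : (∃ a ∈ Finset.univ.filter (fun a : ZMod n × Bool => inRoute n o1 d1 true a),
          flow μ n od σ a < flow μ n od σ' a) ∨
        ∃ a ∈ Finset.univ.filter (fun a : ZMod n × Bool => inRoute n o1 d1 false a),
          flow μ n od σ' a < flow μ n od σ a := by
      by_cases hex : ∃ v, posRoute n o1 d1 v ∧ ¬ posRoute n o2 d2 v
      · left
        obtain ⟨v, hp1, hp2⟩ := hex
        refine ⟨(v, true), Finset.mem_filter.mpr ⟨Finset.mem_univ _, ⟨rfl, by simp [hp1]⟩⟩, ?_⟩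
        rw [flowPos σ mT2 v, flowPos σ' mT2' v]
        simp only [hp1, hp2, if_true, if_false]
        linarith
      · by_cases hex2 : ∃ v, negRoute n o1 d1 v ∧ ¬ negRoute n o2 d2 v
        · right
          obtain ⟨v, hp1, hp2⟩ := hex2
          refine ⟨(v, false), Finset.mem_filter.mpr ⟨Finset.mem_univ _, ⟨rfl, by simp [hp1]⟩⟩, ?_⟩
          rw [flowNeg σ mF2 v, flowNeg σ' mF2' v]
          simp only [hp1, hp2, if_true, if_false]
          linarith
        · exfalso
          push_neg at hex hex2
          refine hiffpos (fun v => ⟨hex v, fun hp2 => ?_⟩)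
          by_contra hp1
          have hn1 : negRoute n o1 d1 v := by
            have := RingAux.pos_iff_not_neg hn h1 (o := o1) (d := d1) v
            tauto
          have hn2 := hex2 v hn1
          exact (RingAux.pos_iff_not_neg hn h2 v).mp hp2 hn2
    have E1 : ∑ a ∈ Finset.univ.filter (fun a : ZMod n × Bool => inRoute n o1 d1 false a),
        c i a (flow μ n od σ a) ≤
        ∑ a ∈ Finset.univ.filter (fun a : ZMod n × Bool => inRoute n o1 d1 true a),
        c i a (flow μ n od σ a) := by
      have h := he i true
      rw [hσi] at h
      simpa only [routeCost, hodi] using h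
    have E2 : ∑ a ∈ Finset.univ.filter (fun a : ZMod n × Bool => inRoute n o1 d1 true a),
        c i a (flow μ n od σ' a) ≤
        ∑ a ∈ Finset.univ.filter (fun a : ZMod n × Bool => inRoute n o1 d1 false a),
        c i a (flow μ n od σ' a) := by
      have h := he' i false
      rw [hσ'i] at h
      simpa only [routeCost, hodi] using h
    exact RingAux.sum_contra _ _ (c i) (hc i) _ _ hS hT hstrict E1 E2
  · -- total shift negative: group 2 must shift down, a group-2 switcher gives a contradiction
    have hlt2 : w2 < y2 := by linarith
    obtain ⟨j, hodj, hσ'j, hσj⟩ := exSwitch σ' σ (o2, d2) hlt2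
    have hS : ∀ a ∈ Finset.univ.filter (fun a : ZMod n × Bool => inRoute n o2 d2 true a),
        flow μ n od σ' a ≤ flow μ n od σ a := by
      rintro ⟨v, b⟩ ha
      obtain ⟨hb, hp⟩ := (Finset.mem_filter.mp ha).2
      simp only at hb
      subst hb
      simp at hp
      rw [flowPos σ mT2 v, flowPos σ' mT2' v]
      by_cases hp1 : posRoute n o1 d1 v <;> simp only [hp, hp1, if_true, if_false] <;> linarith
    have hT : ∀ a ∈ Finset.univ.filter (fun a : ZMod n × Bool => inRoute n o2 d2 false a),
        flow μ n od σ a ≤ flow μ n od σ' a := by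
      rintro ⟨v, b⟩ ha
      obtain ⟨hb, hp⟩ := (Finset.mem_filter.mp ha).2
      simp only at hb
      subst hb
      simp at hp
      rw [flowNeg σ mF2 v, flowNeg σ' mF2' v]
      by_cases hp1 : negRoute n o1 d1 v <;> simp only [hp, hp1, if_true, if_false] <;> linarith
    have hstrict : (∃ a ∈ Finset.univ.filter (fun a : ZMod n × Bool => inRoute n o2 d2 true a),
          flow μ n od σ' a < flow μ n od σ a) ∨
        ∃ a ∈ Finset.univ.filter (fun a : ZMod n × Bool => inRoute n o2 d2 false a),
          flow μ n od σ a < flow μ n od σ' a := by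
      by_cases hex : ∃ v, posRoute n o2 d2 v ∧ ¬ posRoute n o1 d1 v
      · left
        obtain ⟨v, hp2, hp1⟩ := hex
        refine ⟨(v, true), Finset.mem_filter.mpr ⟨Finset.mem_univ _, ⟨rfl, by simp [hp2]⟩⟩, ?_⟩
        rw [flowPos σ mT2 v, flowPos σ' mT2' v]
        simp only [hp1, hp2, if_true, if_false]
        linarith
      · by_cases hex2 : ∃ v, negRoute n o2 d2 v ∧ ¬ negRoute n o1 d1 v
        · right
          obtain ⟨v, hp2, hp1⟩ := hex2
          refine ⟨(v, false), Finset.mem_filter.mpr ⟨Finset.mem_univ _, ⟨rfl, by simp [hp2]⟩⟩, ?_⟩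
          rw [flowNeg σ mF2 v, flowNeg σ' mF2' v]
          simp only [hp1, hp2, if_true, if_false]
          linarith
        · exfalso
          push_neg at hex hex2
          refine hiffpos (fun v => ⟨fun hp1 => ?_, hex v⟩)
          by_contra hp2
          have hn2 : negRoute n o2 d2 v := by
            have := RingAux.pos_iff_not_neg hn h2 (o := o2) (d := d2) v
            tauto
          have hn1 := hex2 v hn2
          exact (RingAux.pos_iff_not_neg hn h1 v).mp hp1 hn1
    have E1 : ∑ a ∈ Finset.univ.filter (fun a : ZMod n × Bool => inRoute n o2 d2 false a),
        c j a (flow μ n od σ' a) ≤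
        ∑ a ∈ Finset.univ.filter (fun a : ZMod n × Bool => inRoute n o2 d2 true a),
        c j a (flow μ n od σ' a) := by
      have h := he' j true
      rw [hσ'j] at h
      simpa only [routeCost, hodj] using h
    have E2 : ∑ a ∈ Finset.univ.filter (fun a : ZMod n × Bool => inRoute n o2 d2 true a),
        c j a (flow μ n od σ a) ≤
        ∑ a ∈ Finset.univ.filter (fun a : ZMod n × Bool => inRoute n o2 d2 false a),
        c j a (flow μ n od σ a) := by
      have h := he j false
      rw [hσj] at h
      simpa only [routeCost, hodj] using h
    exact RingAux.sum_contra _ _ (c j) (hc j) _ _ hS hT hstrict E1 E2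


lemma RingAux.flows_eq {I : Type} {m : MeasurableSpace I} {μ : Measure I} [IsFiniteMeasure μ]
    {n : ℕ} [NeZero n] (hn : 3 ≤ n)
    {o1 d1 o2 d2 : ZMod n} (h1 : o1 ≠ d1) (h2 : o2 ≠ d2) (h12 : (o1, d1) ≠ (o2, d2))
    {od : I → ZMod n × ZMod n} (hod : ∀ i, od i = (o1, d1) ∨ od i = (o2, d2))
    {c : I → ZMod n × Bool → ℝ → ℝ} (hc : ∀ i a, StrictMono (c i a))
    {σ σ' : I → Bool}
    (hm : ∀ a, MeasurableSet {i | inRoute n (od i).1 (od i).2 (σ i) a})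
    (hm' : ∀ a, MeasurableSet {i | inRoute n (od i).1 (od i).2 (σ' i) a})
    (he : IsEquilibrium μ n od c σ) (he' : IsEquilibrium μ n od c σ') :
    ∀ a, flow μ n od σ a = flow μ n od σ' a := by
  obtain ⟨mT1, mT2, mF1, mF2⟩ := RingAux.measAll hn h1 h2 h12 hod σ hm
  obtain ⟨mT1', mT2', mF1', mF2'⟩ := RingAux.measAll hn h1 h2 h12 hod σ' hm'
  have hod2 : ∀ i, od i = (o2, d2) ∨ od i = (o1, d1) := fun i => (hod i).symm
  have e1 : (μ {i | od i = (o1, d1) ∧ σ i = true}).toReal =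
      (μ {i | od i = (o1, d1) ∧ σ' i = true}).toReal := by
    rcases lt_trichotomy ((μ {i | od i = (o1, d1) ∧ σ i = true}).toReal)
      ((μ {i | od i = (o1, d1) ∧ σ' i = true}).toReal) with h | h | h
    · exact absurd h (fun h => RingAux.core hn h1 h2 h12 hod hc hm hm' he he' h)
    · exact h
    · exact absurd h (fun h => RingAux.core hn h1 h2 h12 hod hc hm' hm he' he h)
  have e2 : (μ {i | od i = (o2, d2) ∧ σ i = true}).toReal =
      (μ {i | od i = (o2, d2) ∧ σ' i = true}).toReal := by
    rcases lt_trichotomy ((μ {i | od i = (o2, d2) ∧ σ i = true}).toReal)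
      ((μ {i | od i = (o2, d2) ∧ σ' i = true}).toReal) with h | h | h
    · exact absurd h (fun h => RingAux.core hn h2 h1 (Ne.symm h12) hod2 hc hm hm' he he' h)
    · exact h
    · exact absurd h (fun h => RingAux.core hn h2 h1 (Ne.symm h12) hod2 hc hm' hm he' he h)
  have f1 : (μ {i | od i = (o1, d1) ∧ σ i = false}).toReal =
      (μ {i | od i = (o1, d1) ∧ σ' i = false}).toReal := by
    have c1 := RingAux.cons (μ := μ) σ (o1, d1) mF1
    have c1' := RingAux.cons (μ := μ) σ' (o1, d1) mF1'
    linarith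
  have f2 : (μ {i | od i = (o2, d2) ∧ σ i = false}).toReal =
      (μ {i | od i = (o2, d2) ∧ σ' i = false}).toReal := by
    have c2 := RingAux.cons (μ := μ) σ (o2, d2) mF2
    have c2' := RingAux.cons (μ := μ) σ' (o2, d2) mF2'
    linarith
  rintro ⟨v, b⟩
  cases b
  · rw [RingAux.flowNeg (μ := μ) h12 hod σ mF2 v, RingAux.flowNeg (μ := μ) h12 hod σ' mF2' v,
      f1, f2]
  · rw [RingAux.flowPos (μ := μ) h12 hod σ mT2 v, RingAux.flowPos (μ := μ) h12 hod σ' mT2' v,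
      e1, e2]


/-- If the supply graph is a cycle and there are at most two OD-pairs,
then `(G, H)` has the uniqueness property. -/
theorem uniquenessProperty_of_atMostTwoPairs (n : ℕ) [NeZero n] (hn : 3 ≤ n)
    (L : Finset (ZMod n × ZMod n)) (hL : ∀ ℓ ∈ L, ℓ.1 ≠ ℓ.2)
    (hcard : L.card ≤ 2) :
    UniquenessProperty n L := by
  intro I m μ hfin od hod c hc1 hc2 hc3 σ σ' hm hm' he he' a
  haveI : IsFiniteMeasure μ := hfin
  by_cases hL0 : L = ∅
  · have hempty : ∀ (τ : I → Bool) (a : ZMod n × Bool),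
        {i | inRoute n (od i).1 (od i).2 (τ i) a} = (∅ : Set I) := fun τ a =>
      Set.eq_empty_iff_forall_notMem.mpr
        (fun i _ => Finset.notMem_empty (od i) (hL0 ▸ hod i))
    unfold flow
    rw [hempty σ a, hempty σ' a]
  · obtain ⟨ℓ1, hℓ1⟩ := Finset.nonempty_iff_ne_empty.mpr hL0
    obtain ⟨o1, d1⟩ := ℓ1
    have h1 : o1 ≠ d1 := hL (o1, d1) hℓ1
    by_cases hL2 : ∃ ℓ2 ∈ L, ℓ2 ≠ (o1, d1)
    · obtain ⟨⟨o2, d2⟩, hℓ2, hne2⟩ := hL2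
      have h2 : o2 ≠ d2 := hL (o2, d2) hℓ2
      have hsub : ({(o1, d1), (o2, d2)} : Finset (ZMod n × ZMod n)) ⊆ L := by
        intro x hx
        rcases Finset.mem_insert.mp hx with h | h
        · rw [h]; exact hℓ1
        · rw [Finset.mem_singleton.mp h]; exact hℓ2
      have hcard2 : ({(o1, d1), (o2, d2)} : Finset (ZMod n × ZMod n)).card = 2 :=
        Finset.card_pair (Ne.symm hne2)
      have hLeq : L = {(o1, d1), (o2, d2)} :=
        (Finset.eq_of_subset_of_card_le hsub (by rw [hcard2]; exact hcard)).symm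
      have hod' : ∀ i, od i = (o1, d1) ∨ od i = (o2, d2) := by
        intro i
        have := hod i
        rw [hLeq] at this
        rcases Finset.mem_insert.mp this with h | h
        · exact Or.inl h
        · exact Or.inr (Finset.mem_singleton.mp h)
      exact RingAux.flows_eq hn h1 h2 (fun h => hne2 (h.symm)) hod' hc1 hm hm' he he' a
    · push_neg at hL2
      have hod1 : ∀ i, od i = (o1, d1) := fun i => hL2 (od i) (hod i)
      set d2 : ZMod n := if d1 = o1 + 1 then o1 + 2 else o1 + 1 with hd2
      have h2 : o1 ≠ d2 := by
        rw [hd2]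
        split_ifs
        · intro h
          have : (2 : ZMod n) = 0 := by
            have := (left_eq_add (a := o1) (b := (2 : ZMod n))).mp h
            exact this
          exact RingAux.two_nz hn this
        · intro h
          have : (1 : ZMod n) = 0 := (left_eq_add (a := o1) (b := (1 : ZMod n))).mp h
          exact RingAux.one_nz hn this
      have h12 : (o1, d1) ≠ (o1, d2) := by
        intro h
        have hd : d1 = d2 := congrArg Prod.snd h
        rw [hd2] at hd
        by_cases hc' : d1 = o1 + 1
        · rw [if_pos hc'] at hd
          rw [hc'] at hd
          have : (1 : ZMod n) = 2 := by
            have := add_left_cancel hd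
            exact this
          exact RingAux.one_ne_two hn this
        · rw [if_neg hc'] at hd
          exact hc' hd
      have hod' : ∀ i, od i = (o1, d1) ∨ od i = (o1, d2) := fun i => Or.inl (hod1 i)
      exact RingAux.flows_eq hn h1 h2 h12 hod' hc1 hm hm' he he' a
end
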